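/- arXiv:math/0406306 — 5 statements merged into one kernel-verified Lean document; each statement's English description precedes it below -/
import Mathlib

section
/- Asymptotics of Gamma on vertical lines: for fixed real x, |Γ(x + iy)| is asymptotically equivalent to √(2π)·|y|^(x - 1/2)·exp(-π|y|/2) as |y| → ∞, i.e. the ratio of the two sides tends to 1. -/
open Filter Topology Real Finset

noncomputable def gvaLam (y s : ℝ) : ℝ :=
  s * Real.log (s^2 + y^2) - 2*s + 2*y*Real.arctan (s/y)

noncomputable def gvaPhi (y s : ℝ) : ℝ :=
  s * Real.log (s^2 + y^2) - 2*s*Real.log s + 2*y*Real.arctan (s/y)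

noncomputable def gvaE (a b y t : ℝ) : ℝ :=
  Real.log ((b+t)^2+y^2) - Real.log ((a+t)^2+y^2)

noncomputable def gvaD (a b y t : ℝ) : ℝ :=
  (Real.log ((a+t)^2+y^2) - 2*Real.log (a+t)) - (Real.log ((b+t)^2+y^2) - 2*Real.log (b+t))

noncomputable def gvaC (a b t : ℝ) : ℝ := 2*(Real.log (b+t) - Real.log (a+t))

noncomputable def gvaA (a b y t : ℝ) : ℝ := gvaLam y (b+t) - gvaLam y (a+t)

noncomputable def gvaDD (a b y t : ℝ) : ℝ := gvaPhi y (a+t) - gvaPhi y (b+t)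

lemma gva_c_eq (a b y t : ℝ) : gvaC a b t = gvaD a b y t + gvaE a b y t := by
  simp only [gvaC, gvaD, gvaE]; ring

section derivs

variable {y : ℝ} (hy : y ≠ 0)

include hy in
lemma quad_pos (c t : ℝ) : 0 < (c+t)^2 + y^2 := by positivity

include hy in
lemma hasDerivAt_log_quad (c t : ℝ) :
    HasDerivAt (fun t => Real.log ((c+t)^2+y^2)) (2*(c+t)/((c+t)^2+y^2)) t := by
  have h1 : HasDerivAt (fun t : ℝ => (c+t)^2+y^2) (2*(c+t)) t := by
    have := (((hasDerivAt_id t).const_add c).pow 2).add_const (y^2)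
    simpa using this
  simpa using h1.log (ne_of_gt (quad_pos hy c t))

include hy in
lemma hasDerivAt_arctan_part (t : ℝ) :
    HasDerivAt (fun s : ℝ => 2*y*Real.arctan (s/y)) (2*y^2/(t^2+y^2)) t := by
  have h := (Real.hasDerivAt_arctan (t/y)).comp t ((hasDerivAt_id t).div_const y)
  have h2 := h.const_mul (2*y)
  refine h2.congr_deriv ?_
  have h3 : 1 + (t/y)^2 = (t^2+y^2)/y^2 := by field_simp; ring
  show 2 * y * (1 / (1 + (t / y) ^ 2) * (1 / y)) = _
  rw [h3]
  field_simp

include hy in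
lemma hasDerivAt_gvaLam (s : ℝ) :
    HasDerivAt (gvaLam y) (Real.log (s^2 + y^2)) s := by
  have h1 : HasDerivAt (fun s : ℝ => s * Real.log (s^2+y^2))
      (1 * Real.log (s^2+y^2) + s * (2*(0+s)/((0+s)^2+y^2))) s := by
    exact (hasDerivAt_id s).mul (by simpa using hasDerivAt_log_quad hy 0 s)
  have h2 : HasDerivAt (fun s : ℝ => 2*s) 2 s := by
    simpa using (hasDerivAt_id s).const_mul 2
  have h3 := (h1.sub h2).add (hasDerivAt_arctan_part hy s)
  have he : 0 < s^2 + y^2 := by positivity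
  refine h3.congr_deriv ?_
  field_simp
  ring

include hy in
lemma hasDerivAt_gvaPhi {s : ℝ} (hs : s ≠ 0) :
    HasDerivAt (gvaPhi y) (Real.log (s^2 + y^2) - 2*Real.log s) s := by
  have h1 : HasDerivAt (fun s : ℝ => s * Real.log (s^2+y^2))
      (1 * Real.log (s^2+y^2) + s * (2*(0+s)/((0+s)^2+y^2))) s := by
    exact (hasDerivAt_id s).mul (by simpa using hasDerivAt_log_quad hy 0 s)
  have h2 : HasDerivAt (fun s : ℝ => 2*s*Real.log s)
      (2 * Real.log s + 2*s*s⁻¹) s := by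
    have := ((hasDerivAt_id s).const_mul 2).mul (Real.hasDerivAt_log hs)
    refine this.congr_deriv ?_
    simp only [id]
    ring
  have h3 := (h1.sub h2).add (hasDerivAt_arctan_part hy s)
  have he : 0 < s^2 + y^2 := by positivity
  refine h3.congr_deriv ?_
  field_simp
  ring

include hy in
lemma hasDerivAt_gvaA (a b : ℝ) (t : ℝ) :
    HasDerivAt (gvaA a b y) (gvaE a b y t) t := by
  have hb := (hasDerivAt_gvaLam hy (b+t)).comp t ((hasDerivAt_id t).const_add b)
  have ha := (hasDerivAt_gvaLam hy (a+t)).comp t ((hasDerivAt_id t).const_add a)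
  have := hb.sub ha
  simp only [mul_one] at this; exact this

include hy in
lemma hasDerivAt_gvaDD {a b t : ℝ} (hat : a + t ≠ 0) (hbt : b + t ≠ 0) :
    HasDerivAt (gvaDD a b y) (gvaD a b y t) t := by
  have ha := (hasDerivAt_gvaPhi hy hat).comp t ((hasDerivAt_id t).const_add a)
  have hb := (hasDerivAt_gvaPhi hy hbt).comp t ((hasDerivAt_id t).const_add b)
  have := ha.sub hb
  simp only [mul_one] at this; exact this

include hy in
lemma hasDerivAt_gvaE (a b : ℝ) (t : ℝ) :
    HasDerivAt (gvaE a b y)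
      (2*(b+t)/((b+t)^2+y^2) - 2*(a+t)/((a+t)^2+y^2)) t :=
  (hasDerivAt_log_quad hy b t).sub (hasDerivAt_log_quad hy a t)

include hy in
lemma hasDerivAt_gvaD {a b t : ℝ} (hat : a + t ≠ 0) (hbt : b + t ≠ 0) :
    HasDerivAt (gvaD a b y)
      ((2*(a+t)/((a+t)^2+y^2) - 2/(a+t)) - (2*(b+t)/((b+t)^2+y^2) - 2/(b+t))) t := by
  have ha : HasDerivAt (fun t => 2*Real.log (a+t)) (2/(a+t)) t := by
    have := (((hasDerivAt_id t).const_add a).log hat).const_mul 2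
    refine this.congr_deriv ?_
    simp only [id]
    field_simp
  have hb : HasDerivAt (fun t => 2*Real.log (b+t)) (2/(b+t)) t := by
    have := (((hasDerivAt_id t).const_add b).log hbt).const_mul 2
    refine this.congr_deriv ?_
    simp only [id]
    field_simp
  exact ((hasDerivAt_log_quad hy a t).sub ha).sub ((hasDerivAt_log_quad hy b t).sub hb)

end derivs
section mono

variable {a b y : ℝ} (ha : 0 < a) (hab : a < b)

include ha hab in
lemma gva_monoE (hy : 0 < y) : MonotoneOn (gvaE a b y) (Set.Icc 0 (y-b)) := by
  have hy' : y ≠ 0 := ne_of_gt hy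
  have hdiff : Differentiable ℝ (gvaE a b y) :=
    fun t => (hasDerivAt_gvaE hy' a b t).differentiableAt
  refine monotoneOn_of_deriv_nonneg (convex_Icc _ _) hdiff.continuous.continuousOn
    hdiff.differentiableOn ?_
  intro x hx
  rw [interior_Icc] at hx
  obtain ⟨hx0, hx1⟩ := hx
  rw [(hasDerivAt_gvaE hy' a b x).deriv]
  have hax : 0 < a + x := by linarith
  have hbx : 0 < b + x := by linarith
  have hay : a + x ≤ y := by linarith
  have hby : b + x ≤ y := by linarith
  have hprod : (a+x)*(b+x) ≤ y^2 := by nlinarith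
  have h1 : 0 < (a+x)^2 + y^2 := by positivity
  have h2 : 0 < (b+x)^2 + y^2 := by positivity
  rw [sub_nonneg, div_le_div_iff₀ h1 h2]
  nlinarith

include ha hab in
lemma gva_antitoneD (hy : y ≠ 0) : AntitoneOn (gvaD a b y) (Set.Ici 0) := by
  have hD : ∀ t : ℝ, 0 ≤ t → HasDerivAt (gvaD a b y)
      ((2*(a+t)/((a+t)^2+y^2) - 2/(a+t)) - (2*(b+t)/((b+t)^2+y^2) - 2/(b+t))) t := by
    intro t ht
    exact hasDerivAt_gvaD hy (ne_of_gt (by linarith)) (ne_of_gt (by linarith))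
  refine antitoneOn_of_deriv_nonpos (convex_Ici _) ?_ ?_ ?_
  · exact fun t ht => ((hD t (Set.mem_Ici.mp ht)).differentiableAt).continuousAt.continuousWithinAt
  · intro t ht
    rw [interior_Ici] at ht
    exact ((hD t (le_of_lt (Set.mem_Ioi.mp ht))).differentiableAt).differentiableWithinAt
  · intro t ht
    rw [interior_Ici] at ht
    have ht' : (0:ℝ) < t := Set.mem_Ioi.mp ht
    have hat : 0 < a + t := by linarith
    have hbt : 0 < b + t := by linarith
    rw [(hD t (le_of_lt (Set.mem_Ioi.mp ht))).deriv]
    have key : ∀ u : ℝ, 0 < u → 2*u/(u^2+y^2) - 2/u = -((2*y^2)/(u*(u^2+y^2))) := by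
      intro u hu
      have : 0 < u^2 + y^2 := by positivity
      field_simp
      ring
    rw [key _ hat, key _ hbt, sub_nonpos, neg_le_neg_iff]
    have hPa : 0 < (a+t)*((a+t)^2+y^2) := by positivity
    have h3 : (a+t)^2 ≤ (b+t)^2 := by nlinarith
    have c1 : (a+t)*(a+t)^2 ≤ (b+t)*(a+t)^2 :=
      mul_le_mul_of_nonneg_right (by linarith) (sq_nonneg _)
    have c2 : (b+t)*(a+t)^2 ≤ (b+t)*(b+t)^2 := mul_le_mul_of_nonneg_left h3 (le_of_lt hbt)
    have c3 : (a+t)*y^2 ≤ (b+t)*y^2 := mul_le_mul_of_nonneg_right (by linarith) (sq_nonneg _)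
    have hle : (a+t)*((a+t)^2+y^2) ≤ (b+t)*((b+t)^2+y^2) := by nlinarith [c1, c2, c3]
    exact div_le_div_of_nonneg_left (by positivity) hPa hle

include ha hab in
lemma gva_e_nonneg (t : ℝ) (ht : 0 ≤ t) : 0 ≤ gvaE a b y t := by
  rw [gvaE, sub_nonneg]
  have h1 : 0 < (a+t)^2 + y^2 := by positivity
  refine Real.log_le_log h1 (by nlinarith)

include ha hab in
lemma gva_d_nonneg (t : ℝ) (ht : 0 ≤ t) : 0 ≤ gvaD a b y t := by
  have hat : 0 < a + t := by linarith
  have hbt : 0 < b + t := by linarith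
  have h2 : ∀ u : ℝ, 0 < u → Real.log (u^2+y^2) - 2*Real.log u
      = Real.log ((u^2+y^2)/u^2) := by
    intro u hu
    rw [Real.log_div (by positivity) (by positivity), Real.log_pow]
    push_cast; ring
  rw [gvaD, h2 _ hat, h2 _ hbt, sub_nonneg]
  apply Real.log_le_log (by positivity)
  rw [div_le_div_iff₀ (by positivity) (by positivity)]
  have h3 : (a+t)^2 ≤ (b+t)^2 := by nlinarith
  nlinarith [mul_le_mul_of_nonneg_left h3 (sq_nonneg y)]

end mono
section limits

variable {a b y : ℝ}

lemma gva_part1 (y : ℝ) : Tendsto (fun s : ℝ => s * Real.log (1 + y^2/s^2)) atTop (𝓝 0) := by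
  have h1 : Tendsto (fun s : ℝ => s^2 * Real.log (1 + y^2/s^2)) atTop (𝓝 (y^2)) := by
    have := (Real.tendsto_mul_log_one_add_div_atTop (y^2)).comp
      (tendsto_pow_atTop (two_ne_zero) : Tendsto (fun s : ℝ => s^2) atTop atTop)
    simpa [Function.comp_def] using this
  have h2 : Tendsto (fun s : ℝ => s⁻¹ * (s^2 * Real.log (1 + y^2/s^2))) atTop (𝓝 (0 * y^2)) :=
    tendsto_inv_atTop_zero.mul h1
  rw [zero_mul] at h2
  refine h2.congr' ?_
  filter_upwards [eventually_gt_atTop (0:ℝ)] with s hs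
  field_simp

lemma gva_loglim (c y : ℝ) (hy : y ≠ 0) :
    Tendsto (fun t : ℝ => (c+t) * (Real.log ((c+t)^2 + y^2) - 2*Real.log (c+t))) atTop (𝓝 0) := by
  have key := (gva_part1 y).comp (tendsto_atTop_add_const_left atTop c tendsto_id :
    Tendsto (fun t : ℝ => c + t) atTop atTop)
  refine key.congr' ?_
  filter_upwards [(tendsto_atTop_add_const_left atTop c tendsto_id).eventually_gt_atTop 0]
    with t ht
  have hct : (0:ℝ) < c + t := by simpa using ht
  have h2 : Real.log ((c+t)^2+y^2) - 2*Real.log (c+t) = Real.log (1 + y^2/(c+t)^2) := by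
    rw [show (1 : ℝ) + y^2/(c+t)^2 = ((c+t)^2+y^2)/(c+t)^2 by
      field_simp]
    rw [Real.log_div (by positivity) (pow_ne_zero 2 (ne_of_gt hct)), Real.log_pow]
    push_cast; ring
  rw [h2]
  rfl

lemma gva_arctanlim (c y : ℝ) (hy : 0 < y) :
    Tendsto (fun t : ℝ => Real.arctan ((c+t)/y)) atTop (𝓝 (Real.pi/2)) := by
  have h1 : Tendsto (fun t : ℝ => (c+t)/y) atTop atTop :=
    (tendsto_atTop_add_const_left atTop c tendsto_id).atTop_div_const hy
  exact (Real.tendsto_arctan_atTop.mono_right nhdsWithin_le_nhds).comp h1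

lemma gva_DD_tendsto (ha : 0 < a) (hab : a < b) (hy : 0 < y) :
    Tendsto (gvaDD a b y) atTop (𝓝 0) := by
  have hy' : y ≠ 0 := ne_of_gt hy
  have h1 := (gva_loglim a y hy').sub (gva_loglim b y hy')
  have h2 : Tendsto (fun t : ℝ => 2*y*(Real.arctan ((a+t)/y) - Real.arctan ((b+t)/y)))
      atTop (𝓝 (2*y*(Real.pi/2 - Real.pi/2))) :=
    (((gva_arctanlim a y hy).sub (gva_arctanlim b y hy)).const_mul (2*y))
  rw [sub_self, mul_zero] at h2
  have h3 := h1.add h2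
  rw [sub_zero, add_zero] at h3
  refine h3.congr (fun t => ?_)
  simp only [gvaDD, gvaPhi]
  ring

end limits

noncomputable def gvaH (a b y : ℝ) : ℝ :=
  2*(Real.log (‖Complex.Gamma ((b:ℂ) + y*Complex.I)‖) + Real.log (Real.Gamma a)
     - Real.log (‖Complex.Gamma ((a:ℂ) + y*Complex.I)‖) - Real.log (Real.Gamma b))

lemma gva_absGammaSeq (x y : ℝ) (n : ℕ) (hn : 0 < n) :
    (‖Complex.GammaSeq ((x:ℂ) + y*Complex.I) n‖)^2
      = ((n:ℝ)^x)^2 * ((n.factorial : ℝ))^2 / ∏ j ∈ range (n+1), ((x+j)^2+y^2) := by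
  have hnp : (0:ℝ) < n := by exact_mod_cast hn
  rw [Complex.GammaSeq]
  rw [norm_div, norm_mul]
  have habs1 : ‖(n:ℂ) ^ ((x:ℂ) + y*Complex.I)‖ = (n:ℝ)^x := by
    rw [show ((n:ℂ)) = (((n:ℝ)):ℂ) by push_cast; rfl]
    rw [Complex.norm_cpow_eq_rpow_re_of_pos hnp]
    congr 1
    simp
  have habs2 : ‖(n.factorial : ℂ)‖ = (n.factorial : ℝ) := by
    rw [show ((n.factorial:ℂ)) = (((n.factorial:ℝ)):ℂ) by push_cast; rfl]
    exact Complex.norm_of_nonneg (by positivity)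
  have habs3 : (‖∏ j ∈ range (n+1), ((x:ℂ) + y*Complex.I + j)‖)^2
      = ∏ j ∈ range (n+1), ((x+j)^2+y^2) := by
    rw [norm_prod, ← Finset.prod_pow]
    refine Finset.prod_congr rfl (fun j _ => ?_)
    rw [Complex.sq_norm, Complex.normSq_apply]
    have hre : ((x:ℂ) + y*Complex.I + j).re = x + j := by simp
    have him : ((x:ℂ) + y*Complex.I + j).im = y := by simp
    rw [hre, him]; ring
  rw [habs1, habs2, div_pow, mul_pow, habs3]

lemma gva_sum_d_tendsto' {a b y : ℝ} (ha : 0 < a) (hb : 0 < b) (hy : y ≠ 0) :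
    Tendsto (fun n : ℕ => ∑ j ∈ range (n+1), gvaD a b y j) atTop (𝓝 (gvaH a b y)) := by
  have hΓ : ∀ x : ℝ, Complex.Gamma ((x:ℂ) + y*Complex.I) ≠ 0 := by
    intro x
    apply Complex.Gamma_ne_zero
    intro m h
    have him : ((x:ℂ) + y*Complex.I).im = y := by simp
    rw [h] at him
    simp at him
    exact hy him.symm
  have habsa : 0 < ‖Complex.Gamma ((a:ℂ) + y*Complex.I)‖ :=
    norm_pos_iff.mpr (hΓ a)
  have habsb : 0 < ‖Complex.Gamma ((b:ℂ) + y*Complex.I)‖ :=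
    norm_pos_iff.mpr (hΓ b)
  have hΓa : 0 < Real.Gamma a := Real.Gamma_pos_of_pos ha
  have hΓb : 0 < Real.Gamma b := Real.Gamma_pos_of_pos hb
  set L : ℝ := ((‖Complex.Gamma ((a:ℂ) + y*Complex.I)‖)^2 * (Real.Gamma b)^2) /
      ((‖Complex.Gamma ((b:ℂ) + y*Complex.I)‖)^2 * (Real.Gamma a)^2) with hLdef
  have hL : 0 < L := by positivity
  set P : ℕ → ℝ := fun n => ∏ j ∈ range (n+1),
      ((((b:ℝ)+j)^2+y^2) * ((a+j)^2)) / ((((a:ℝ)+j)^2+y^2) * ((b+j)^2)) with hPdef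
  have haj : ∀ j : ℕ, 0 < a + (j:ℝ) := fun j => add_pos_of_pos_of_nonneg ha (Nat.cast_nonneg j)
  have hbj : ∀ j : ℕ, 0 < b + (j:ℝ) := fun j => add_pos_of_pos_of_nonneg hb (Nat.cast_nonneg j)
  have hqA : ∀ n : ℕ, 0 < ∏ j ∈ range (n+1), (((a:ℝ)+j)^2+y^2) :=
    fun n => Finset.prod_pos (fun j _ => by positivity)
  have hqB : ∀ n : ℕ, 0 < ∏ j ∈ range (n+1), (((b:ℝ)+j)^2+y^2) :=
    fun n => Finset.prod_pos (fun j _ => by positivity)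
  have hpA : ∀ n : ℕ, 0 < ∏ j ∈ range (n+1), ((a:ℝ)+j) :=
    fun n => Finset.prod_pos (fun j _ => haj j)
  have hpB : ∀ n : ℕ, 0 < ∏ j ∈ range (n+1), ((b:ℝ)+j) :=
    fun n => Finset.prod_pos (fun j _ => hbj j)
  have hP : ∀ n : ℕ, 0 < n → P n =
      ((‖Complex.GammaSeq ((a:ℂ) + y*Complex.I) n‖)^2 * (Real.GammaSeq b n)^2) /
      ((‖Complex.GammaSeq ((b:ℂ) + y*Complex.I) n‖)^2 * (Real.GammaSeq a n)^2) := by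
    intro n hn
    have hnp : (0:ℝ) < n := by exact_mod_cast hn
    have hfac : (0:ℝ) < (n.factorial : ℝ) := by positivity
    have hna : (0:ℝ) < (n:ℝ)^a := Real.rpow_pos_of_pos hnp a
    have hnb : (0:ℝ) < (n:ℝ)^b := Real.rpow_pos_of_pos hnp b
    rw [gva_absGammaSeq a y n hn, gva_absGammaSeq b y n hn, Real.GammaSeq, Real.GammaSeq]
    have hPn : P n = ((∏ j ∈ range (n+1), (((b:ℝ)+j)^2+y^2)) * (∏ j ∈ range (n+1), ((a:ℝ)+j))^2) /
        ((∏ j ∈ range (n+1), (((a:ℝ)+j)^2+y^2)) * (∏ j ∈ range (n+1), ((b:ℝ)+j))^2) := by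
      simp only [hPdef]
      rw [Finset.prod_div_distrib, Finset.prod_mul_distrib, Finset.prod_mul_distrib,
        Finset.prod_pow, Finset.prod_pow]
    rw [hPn]
    rw [div_pow, div_pow, div_eq_div_iff (by positivity) (by positivity)]
    field_simp
  have hPlim : Tendsto P atTop (𝓝 L) := by
    have t1 : Tendsto (fun n => ‖Complex.GammaSeq ((a:ℂ) + y*Complex.I) n‖) atTop
        (𝓝 (‖Complex.Gamma ((a:ℂ) + y*Complex.I)‖)) :=
      (continuous_norm.tendsto _).comp (Complex.GammaSeq_tendsto_Gamma _)
    have t2 : Tendsto (fun n => ‖Complex.GammaSeq ((b:ℂ) + y*Complex.I) n‖) atTop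
        (𝓝 (‖Complex.Gamma ((b:ℂ) + y*Complex.I)‖)) :=
      (continuous_norm.tendsto _).comp (Complex.GammaSeq_tendsto_Gamma _)
    have hnum := (t1.pow 2).mul ((Real.GammaSeq_tendsto_Gamma b).pow 2)
    have hden := (t2.pow 2).mul ((Real.GammaSeq_tendsto_Gamma a).pow 2)
    have hd0 : (‖Complex.Gamma ((b:ℂ) + y*Complex.I)‖)^2 * (Real.Gamma a)^2 ≠ 0 := by
      positivity
    refine (hnum.div hden hd0).congr' ?_
    filter_upwards [eventually_gt_atTop 0] with n hn
    exact (hP n hn).symm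
  have hPpos : ∀ n, 0 < P n := fun n => Finset.prod_pos (fun j _ => by
    have := haj j; have := hbj j; positivity)
  have hlogP : ∀ n : ℕ, Real.log (P n) = -∑ j ∈ range (n+1), gvaD a b y j := by
    intro n
    simp only [hPdef]
    rw [Real.log_prod (fun j _ => by have := haj j; have := hbj j; positivity)]
    rw [← Finset.sum_neg_distrib]
    refine Finset.sum_congr rfl (fun j _ => ?_)
    have h1 := haj j; have h2 := hbj j
    rw [Real.log_div (by positivity) (by positivity), Real.log_mul (by positivity) (by positivity),
      Real.log_mul (by positivity) (by positivity), Real.log_pow, Real.log_pow]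
    simp only [gvaD]
    push_cast
    ring
  have hloglim : Tendsto (fun n => Real.log (P n)) atTop (𝓝 (Real.log L)) :=
    ((Real.continuousAt_log (ne_of_gt hL)).tendsto).comp hPlim
  have hfin : Tendsto (fun n : ℕ => ∑ j ∈ range (n+1), gvaD a b y j) atTop (𝓝 (-Real.log L)) := by
    have := hloglim.neg
    refine this.congr (fun n => ?_)
    rw [hlogP n, neg_neg]
  convert hfin using 2
  rw [hLdef]
  rw [Real.log_div (by positivity) (by positivity), Real.log_mul (by positivity) (by positivity),
    Real.log_mul (by positivity) (by positivity), Real.log_pow, Real.log_pow, Real.log_pow,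
    Real.log_pow]
  rw [gvaH]
  push_cast
  ring

lemma gva_gauss' {a b : ℝ} (ha : 0 < a) (hb : 0 < b) :
    Tendsto (fun M : ℕ => (∑ j ∈ range M, gvaC a b j) - 2*(b-a)*Real.log M) atTop
      (𝓝 (2*Real.log (Real.Gamma a) - 2*Real.log (Real.Gamma b))) := by
  have hΓa : 0 < Real.Gamma a := Real.Gamma_pos_of_pos ha
  have hΓb : 0 < Real.Gamma b := Real.Gamma_pos_of_pos hb
  have haj : ∀ j : ℕ, 0 < a + (j:ℝ) := fun j => add_pos_of_pos_of_nonneg ha (Nat.cast_nonneg j)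
  have hbj : ∀ j : ℕ, 0 < b + (j:ℝ) := fun j => add_pos_of_pos_of_nonneg hb (Nat.cast_nonneg j)
  have h1 : Tendsto (fun n => Real.GammaSeq a n / Real.GammaSeq b n) atTop
      (𝓝 (Real.Gamma a / Real.Gamma b)) :=
    (Real.GammaSeq_tendsto_Gamma a).div (Real.GammaSeq_tendsto_Gamma b) (ne_of_gt hΓb)
  have h2 : Tendsto (fun n => Real.log (Real.GammaSeq a n / Real.GammaSeq b n)) atTop
      (𝓝 (Real.log (Real.Gamma a / Real.Gamma b))) :=
    ((Real.continuousAt_log (ne_of_gt (by positivity))).tendsto).comp h1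
  have hGS : ∀ (x : ℝ), 0 < x → ∀ n : ℕ, 0 < n → Real.log (Real.GammaSeq x n)
      = x * Real.log n + Real.log n.factorial - ∑ j ∈ range (n+1), Real.log (x+j) := by
    intro x hx n hn
    have hnp : (0:ℝ) < n := by exact_mod_cast hn
    have hxj : ∀ j : ℕ, 0 < x + (j:ℝ) := fun j => add_pos_of_pos_of_nonneg hx (Nat.cast_nonneg j)
    have hpX : 0 < ∏ j ∈ range (n+1), (x+(j:ℝ)) := Finset.prod_pos (fun j _ => hxj j)
    rw [Real.GammaSeq, Real.log_div (by positivity) (ne_of_gt hpX),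
      Real.log_mul (ne_of_gt (Real.rpow_pos_of_pos hnp x)) (by positivity),
      Real.log_rpow hnp, Real.log_prod (fun j _ => ne_of_gt (hxj j))]
  have h3 : ∀ n : ℕ, 0 < n → Real.log (Real.GammaSeq a n / Real.GammaSeq b n)
      = (∑ j ∈ range (n+1), (Real.log (b+j) - Real.log (a+j))) - (b-a)*Real.log n := by
    intro n hn
    have hnp : (0:ℝ) < n := by exact_mod_cast hn
    have hga : 0 < Real.GammaSeq a n := by
      rw [Real.GammaSeq]
      have := Finset.prod_pos (fun j (_ : j ∈ range (n+1)) => haj j)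
      positivity
    have hgb : 0 < Real.GammaSeq b n := by
      rw [Real.GammaSeq]
      have := Finset.prod_pos (fun j (_ : j ∈ range (n+1)) => hbj j)
      positivity
    rw [Real.log_div (ne_of_gt hga) (ne_of_gt hgb), hGS a ha n hn, hGS b hb n hn,
      Finset.sum_sub_distrib]
    ring
  have h4 : Tendsto (fun n : ℕ => (∑ j ∈ range (n+1), (Real.log (b+j) - Real.log (a+j)))
      - (b-a)*Real.log n) atTop (𝓝 (Real.log (Real.Gamma a) - Real.log (Real.Gamma b))) := by
    rw [← Real.log_div (ne_of_gt hΓa) (ne_of_gt hΓb)]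
    refine h2.congr' ?_
    filter_upwards [eventually_gt_atTop 0] with n hn
    exact h3 n hn
  have h5 : Tendsto (fun n : ℕ => Real.log ((n:ℝ)+1) - Real.log n) atTop (𝓝 0) := by
    have hbase : Tendsto (fun n : ℕ => Real.log (1 + 1/(n:ℝ))) atTop (𝓝 0) := by
      have hin : Tendsto (fun n : ℕ => 1 + 1/(n:ℝ)) atTop (𝓝 1) := by
        simpa using ((tendsto_one_div_atTop_nhds_zero_nat (𝕜 := ℝ)).const_add 1)
      have := ((Real.continuousAt_log one_ne_zero).tendsto).comp hin
      simpa [Function.comp_def] using this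
    refine hbase.congr' ?_
    filter_upwards [eventually_gt_atTop 0] with n hn
    have hnp : (0:ℝ) < n := by exact_mod_cast hn
    rw [show (1:ℝ) + 1/(n:ℝ) = ((n:ℝ)+1)/n by field_simp]
    rw [Real.log_div (by positivity) (ne_of_gt hnp)]
  have h6 : Tendsto (fun n : ℕ => (∑ j ∈ range (n+1), gvaC a b j) - 2*(b-a)*Real.log ((n:ℝ)+1))
      atTop (𝓝 (2*Real.log (Real.Gamma a) - 2*Real.log (Real.Gamma b))) := by
    have := (h4.const_mul 2).sub (h5.const_mul (2*(b-a)))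
    rw [mul_zero, sub_zero] at this
    rw [show (2:ℝ) * (Real.log (Real.Gamma a) - Real.log (Real.Gamma b))
      = 2*Real.log (Real.Gamma a) - 2*Real.log (Real.Gamma b) from by ring] at this
    refine this.congr (fun n => ?_)
    have hsum : ∑ j ∈ range (n+1), gvaC a b (j:ℝ)
        = 2 * ∑ j ∈ range (n+1), (Real.log (b+j) - Real.log (a+j)) := by
      rw [Finset.mul_sum]
      exact Finset.sum_congr rfl (fun j _ => by simp [gvaC])
    rw [hsum]
    ring
  refine (tendsto_add_atTop_iff_nat (f := fun M : ℕ => (∑ j ∈ range M, gvaC a b j)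
      - 2*(b-a)*Real.log M) 1).mp (h6.congr (fun n => ?_))
  push_cast
  ring
lemma gva_tele_ge (g f : ℕ → ℝ) (h : ∀ i, g (i+1) - g i ≤ f i) (K : ℕ) :
    g K - g 0 ≤ ∑ i ∈ range K, f i := by
  rw [← Finset.sum_range_sub g K]
  exact Finset.sum_le_sum (fun i _ => h i)

lemma gva_tele_le (g f : ℕ → ℝ) (h : ∀ i, f (i+1) ≤ g (i+1) - g i) (K : ℕ) :
    ∑ i ∈ range K, f (i+1) ≤ g K - g 0 := by
  rw [← Finset.sum_range_sub g K]
  exact Finset.sum_le_sum (fun i _ => h i)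

lemma gva_bounds {a b y : ℝ} (ha : 0 < a) (hab : a < b) (hy : b + 1 ≤ y) :
    gvaH a b y ∈ Set.Icc
      ((∑ j ∈ range ⌊y-b⌋₊, gvaC a b j)
        - (gvaA a b y ⌊y-b⌋₊ - gvaA a b y 0) - gvaDD a b y ⌊y-b⌋₊)
      ((∑ j ∈ range ⌊y-b⌋₊, gvaC a b j)
        - (gvaA a b y ⌊y-b⌋₊ - gvaA a b y 0) - gvaDD a b y ⌊y-b⌋₊
        + gvaE a b y ⌊y-b⌋₊ + gvaD a b y ⌊y-b⌋₊) := by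
  have hb : 0 < b := lt_trans ha hab
  have hy0 : 0 < y := by linarith
  have hy' : y ≠ 0 := ne_of_gt hy0
  set M : ℕ := ⌊y-b⌋₊ with hMdef
  set m : ℝ := (M:ℝ) with hmdef
  have hm1 : 1 ≤ M := Nat.le_floor (by push_cast; linarith)
  have hm1' : (1:ℝ) ≤ m := Nat.one_le_cast.mpr hm1
  have hmle : m ≤ y - b := Nat.floor_le (by linarith)
  -- step bounds for e
  have hdiffA : Differentiable ℝ (gvaA a b y) :=
    fun t => (hasDerivAt_gvaA hy' a b t).differentiableAt
  have hmonoE := gva_monoE ha hab hy0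
  have st1 : ∀ j : ℕ, j < M → gvaE a b y j ≤ gvaA a b y ((j:ℝ)+1) - gvaA a b y j := by
    intro j hj
    have hjm : (j:ℝ) + 1 ≤ m := by
      have h0 := (Nat.cast_le (α := ℝ)).mpr (Nat.succ_le_of_lt hj)
      push_cast at h0
      linarith
    have key := (convex_Icc (j:ℝ) ((j:ℝ)+1)).mul_sub_le_image_sub_of_le_deriv
      (hdiffA.continuous.continuousOn) (hdiffA.differentiableOn)
      (C := gvaE a b y j) ?_ (j:ℝ) ?_ ((j:ℝ)+1) ?_ (by linarith)
    · simpa using key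
    · intro x hx
      rw [interior_Icc] at hx
      rw [(hasDerivAt_gvaA hy' a b x).deriv]
      refine hmonoE ⟨Nat.cast_nonneg j, by linarith⟩
        ⟨le_trans (Nat.cast_nonneg j) (le_of_lt hx.1), by linarith [hx.2]⟩ (le_of_lt hx.1)
    · exact Set.left_mem_Icc.mpr (by linarith)
    · exact Set.right_mem_Icc.mpr (by linarith)
  have st2 : ∀ j : ℕ, j < M → gvaA a b y ((j:ℝ)+1) - gvaA a b y j ≤ gvaE a b y ((j:ℝ)+1) := by
    intro j hj
    have hjm : (j:ℝ) + 1 ≤ m := by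
      have h0 := (Nat.cast_le (α := ℝ)).mpr (Nat.succ_le_of_lt hj)
      push_cast at h0
      linarith
    have key := (convex_Icc (j:ℝ) ((j:ℝ)+1)).image_sub_le_mul_sub_of_deriv_le
      (hdiffA.continuous.continuousOn) (hdiffA.differentiableOn)
      (C := gvaE a b y ((j:ℝ)+1)) ?_ (j:ℝ) ?_ ((j:ℝ)+1) ?_ (by linarith)
    · simpa using key
    · intro x hx
      rw [interior_Icc] at hx
      rw [(hasDerivAt_gvaA hy' a b x).deriv]
      refine hmonoE ⟨le_trans (Nat.cast_nonneg j) (le_of_lt hx.1), by linarith [hx.2]⟩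
        ⟨by positivity, by linarith⟩ (le_of_lt hx.2)
    · exact Set.left_mem_Icc.mpr (by linarith)
    · exact Set.right_mem_Icc.mpr (by linarith)
  have htel : ∑ j ∈ range M, (gvaA a b y ((j:ℝ)+1) - gvaA a b y j)
      = gvaA a b y m - gvaA a b y 0 := by
    have h0 : ∑ j ∈ range M, (gvaA a b y ((j:ℝ)+1) - gvaA a b y j)
        = gvaA a b y ((M:ℕ):ℝ) - gvaA a b y ((0:ℕ):ℝ) := by
      rw [← Finset.sum_range_sub (f := fun j : ℕ => gvaA a b y j) M]
      refine Finset.sum_congr rfl (fun j _ => ?_)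
      norm_num [Nat.cast_succ]
    simpa using h0
  have SA_up : ∑ j ∈ range M, gvaE a b y j ≤ gvaA a b y m - gvaA a b y 0 := by
    rw [← htel]
    exact Finset.sum_le_sum (fun j hj => st1 j (Finset.mem_range.mp hj))
  have SA_lo : gvaA a b y m - gvaA a b y 0 ≤ (∑ j ∈ range M, gvaE a b y j) + gvaE a b y m := by
    rw [← htel]
    have h1 : ∑ j ∈ range M, (gvaA a b y ((j:ℝ)+1) - gvaA a b y j)
        ≤ ∑ j ∈ range M, gvaE a b y ((j:ℝ)+1) :=
      Finset.sum_le_sum (fun j hj => st2 j (Finset.mem_range.mp hj))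
    refine le_trans h1 ?_
    have h2 : ∑ j ∈ range (M+1), gvaE a b y j
        = (∑ j ∈ range M, gvaE a b y ((j:ℝ)+1)) + gvaE a b y 0 := by
      rw [Finset.sum_range_succ' (fun j : ℕ => gvaE a b y j) M]
      norm_num [Nat.cast_succ]
    have h3 : ∑ j ∈ range (M+1), gvaE a b y j
        = (∑ j ∈ range M, gvaE a b y j) + gvaE a b y m := by
      rw [Finset.sum_range_succ]
    have h4 : 0 ≤ gvaE a b y 0 := gva_e_nonneg ha hab 0 le_rfl
    linarith
  -- step bounds for d
  have hdiffDD : ∀ x : ℝ, 0 ≤ x → HasDerivAt (gvaDD a b y) (gvaD a b y x) x :=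
    fun x hx => hasDerivAt_gvaDD hy' (ne_of_gt (by linarith)) (ne_of_gt (by linarith))
  have hantD := gva_antitoneD ha hab hy'
  have stD1 : ∀ j : ℕ, gvaDD a b y ((j:ℝ)+1) - gvaDD a b y j ≤ gvaD a b y j := by
    intro j
    have key := (convex_Icc (j:ℝ) ((j:ℝ)+1)).image_sub_le_mul_sub_of_deriv_le
      (fun x hx => ((hdiffDD x (le_trans (Nat.cast_nonneg j) hx.1)
        ).differentiableAt.continuousAt).continuousWithinAt)
      (fun x hx => by
        rw [interior_Icc] at hx
        exact (hdiffDD x (le_trans (Nat.cast_nonneg j) (le_of_lt hx.1))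
          ).differentiableAt.differentiableWithinAt)
      (C := gvaD a b y j) ?_ (j:ℝ) ?_ ((j:ℝ)+1) ?_ (by linarith)
    · simpa using key
    · intro x hx
      rw [interior_Icc] at hx
      have hx0 : (0:ℝ) ≤ x := le_trans (Nat.cast_nonneg j) (le_of_lt hx.1)
      rw [(hdiffDD x hx0).deriv]
      exact hantD (Set.mem_Ici.mpr (Nat.cast_nonneg j)) (Set.mem_Ici.mpr hx0) (le_of_lt hx.1)
    · exact Set.left_mem_Icc.mpr (by linarith)
    · exact Set.right_mem_Icc.mpr (by linarith)
  have stD2 : ∀ j : ℕ, gvaD a b y ((j:ℝ)+1) ≤ gvaDD a b y ((j:ℝ)+1) - gvaDD a b y j := by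
    intro j
    have key := (convex_Icc (j:ℝ) ((j:ℝ)+1)).mul_sub_le_image_sub_of_le_deriv
      (fun x hx => ((hdiffDD x (le_trans (Nat.cast_nonneg j) hx.1)
        ).differentiableAt.continuousAt).continuousWithinAt)
      (fun x hx => by
        rw [interior_Icc] at hx
        exact (hdiffDD x (le_trans (Nat.cast_nonneg j) (le_of_lt hx.1))
          ).differentiableAt.differentiableWithinAt)
      (C := gvaD a b y ((j:ℝ)+1)) ?_ (j:ℝ) ?_ ((j:ℝ)+1) ?_ (by linarith)
    · simpa using key
    · intro x hx
      rw [interior_Icc] at hx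
      have hx0 : (0:ℝ) ≤ x := le_trans (Nat.cast_nonneg j) (le_of_lt hx.1)
      rw [(hdiffDD x hx0).deriv]
      refine hantD (Set.mem_Ici.mpr hx0) (Set.mem_Ici.mpr (by
        linarith [Nat.cast_nonneg (α := ℝ) j])) (le_of_lt hx.2)
    · exact Set.left_mem_Icc.mpr (by linarith)
    · exact Set.right_mem_Icc.mpr (by linarith)
  -- limits of DD along ℕ
  have hDDlim : Tendsto (fun n : ℕ => gvaDD a b y n) atTop (𝓝 0) :=
    (gva_DD_tendsto ha hab hy0).comp tendsto_natCast_atTop_atTop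
  have hDDlim1 : Tendsto (fun n : ℕ => gvaDD a b y ((n:ℝ)+1)) atTop (𝓝 0) := by
    have h0 := hDDlim.comp (tendsto_add_atTop_nat 1)
    refine h0.congr (fun n => ?_)
    simp only [Function.comp_apply]
    norm_num [Nat.cast_succ]
  have hsumd := gva_sum_d_tendsto' ha hb hy'
  have hcast : ∀ i : ℕ, ((M+i : ℕ):ℝ) = m + i := by intro i; push_cast; ring
  -- tail lower bound : Hy ≥ ∑_{<M} d - DD m
  have hlow : (∑ j ∈ range M, gvaD a b y j) - gvaDD a b y m ≤ gvaH a b y := by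
    have hlim := hsumd.sub hDDlim1
    rw [sub_zero] at hlim
    refine ge_of_tendsto hlim ?_
    filter_upwards [eventually_ge_atTop M] with n hn
    have hsplit : ∑ j ∈ range (n+1), gvaD a b y j
        = (∑ j ∈ range M, gvaD a b y j) + ∑ i ∈ range (n+1-M), gvaD a b y ((M+i : ℕ):ℝ) := by
      rw [← Finset.sum_Ico_eq_sum_range (f := fun j : ℕ => gvaD a b y j) (m := M) (n := n+1)]
      rw [Finset.sum_Ico_eq_sub _ (by omega)]
      ring
    have htail : gvaDD a b y ((n:ℝ)+1) - gvaDD a b y m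
        ≤ ∑ i ∈ range (n+1-M), gvaD a b y ((M+i : ℕ):ℝ) := by
      have h0 := gva_tele_ge (fun i : ℕ => gvaDD a b y ((M+i : ℕ):ℝ))
        (fun i : ℕ => gvaD a b y ((M+i : ℕ):ℝ)) ?_ (n+1-M)
      · have he1 : ((M+(n+1-M) : ℕ):ℝ) = (n:ℝ)+1 := by
          have : M+(n+1-M) = n+1 := by omega
          rw [this]; push_cast; ring
        have he2 : ((M+0 : ℕ):ℝ) = m := by norm_num [hmdef]
        rwa [he1, he2] at h0
      · intro i
        show gvaDD a b y ((M+(i+1) : ℕ):ℝ) - gvaDD a b y ((M+i : ℕ):ℝ)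
          ≤ gvaD a b y ((M+i : ℕ):ℝ)
        have h2 : ((M+(i+1) : ℕ):ℝ) = ((M+i : ℕ):ℝ) + 1 := by push_cast; ring
        rw [h2]
        exact stD1 (M+i)
    calc (∑ j ∈ range M, gvaD a b y j) - gvaDD a b y m
        = (∑ j ∈ range M, gvaD a b y j) + (gvaDD a b y ((n:ℝ)+1) - gvaDD a b y m)
          - gvaDD a b y ((n:ℝ)+1) := by ring
      _ ≤ (∑ j ∈ range M, gvaD a b y j) + (∑ i ∈ range (n+1-M), gvaD a b y ((M+i : ℕ):ℝ))
          - gvaDD a b y ((n:ℝ)+1) := by linarith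
      _ = (∑ j ∈ range (n+1), gvaD a b y j) - gvaDD a b y ((n:ℝ)+1) := by rw [hsplit]
  -- tail upper bound : Hy ≤ ∑_{<M} d + d m - DD m
  have hhigh : gvaH a b y ≤ (∑ j ∈ range M, gvaD a b y j) + gvaD a b y m - gvaDD a b y m := by
    have hlim := hsumd.sub hDDlim
    rw [sub_zero] at hlim
    refine le_of_tendsto hlim ?_
    filter_upwards [eventually_ge_atTop M] with n hn
    have hK : n+1-M = (n-M)+1 := by omega
    have hsplit : ∑ j ∈ range (n+1), gvaD a b y j
        = (∑ j ∈ range M, gvaD a b y j) + ∑ i ∈ range (n+1-M), gvaD a b y ((M+i : ℕ):ℝ) := by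
      rw [← Finset.sum_Ico_eq_sum_range (f := fun j : ℕ => gvaD a b y j) (m := M) (n := n+1)]
      rw [Finset.sum_Ico_eq_sub _ (by omega)]
      ring
    have htail : ∑ i ∈ range (n+1-M), gvaD a b y ((M+i : ℕ):ℝ)
        ≤ gvaD a b y m + (gvaDD a b y n - gvaDD a b y m) := by
      rw [hK, Finset.sum_range_succ' (fun i : ℕ => gvaD a b y ((M+i : ℕ):ℝ)) (n-M)]
      have h1 : ∑ i ∈ range (n-M), gvaD a b y ((M+(i+1) : ℕ):ℝ)
          ≤ gvaDD a b y ((M+(n-M):ℕ):ℝ) - gvaDD a b y ((M+0:ℕ):ℝ) := by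
        refine gva_tele_le (fun i : ℕ => gvaDD a b y ((M+i : ℕ):ℝ))
          (fun i : ℕ => gvaD a b y ((M+i : ℕ):ℝ)) ?_ (n-M)
        intro i
        show gvaD a b y ((M+(i+1) : ℕ):ℝ)
          ≤ gvaDD a b y ((M+(i+1) : ℕ):ℝ) - gvaDD a b y ((M+i : ℕ):ℝ)
        have h2 : ((M+(i+1) : ℕ):ℝ) = ((M+i : ℕ):ℝ) + 1 := by push_cast; ring
        rw [h2]
        exact stD2 (M+i)
      have he1 : ((M+(n-M) : ℕ):ℝ) = (n:ℝ) := by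
        have : M+(n-M) = n := by omega
        rw [this]
      have he2 : ((M+0 : ℕ):ℝ) = m := by norm_num [hmdef]
      rw [he1, he2] at h1
      have he3 : ((M+0 : ℕ):ℝ) = m := by norm_num [hmdef]
      rw [he3]
      linarith
    calc ∑ j ∈ range (n+1), gvaD a b y j - gvaDD a b y ((n:ℕ):ℝ)
        = (∑ j ∈ range M, gvaD a b y j) + (∑ i ∈ range (n+1-M), gvaD a b y ((M+i : ℕ):ℝ))
          - gvaDD a b y n := by rw [hsplit]
      _ ≤ (∑ j ∈ range M, gvaD a b y j) + (gvaD a b y m + (gvaDD a b y n - gvaDD a b y m))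
          - gvaDD a b y n := by linarith
      _ = (∑ j ∈ range M, gvaD a b y j) + gvaD a b y m - gvaDD a b y m := by ring
  -- combine with c = d + e
  have hcde : ∑ j ∈ range M, gvaD a b y j
      = (∑ j ∈ range M, gvaC a b j) - ∑ j ∈ range M, gvaE a b y j := by
    rw [← Finset.sum_sub_distrib]
    refine Finset.sum_congr rfl (fun j _ => ?_)
    rw [gva_c_eq a b y]
    ring
  constructor
  · calc (∑ j ∈ range M, gvaC a b j) - (gvaA a b y m - gvaA a b y 0) - gvaDD a b y m
        ≤ (∑ j ∈ range M, gvaC a b j) - ∑ j ∈ range M, gvaE a b y j - gvaDD a b y m := by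
          linarith
      _ = (∑ j ∈ range M, gvaD a b y j) - gvaDD a b y m := by rw [hcde]
      _ ≤ gvaH a b y := hlow
  · calc gvaH a b y
        ≤ (∑ j ∈ range M, gvaD a b y j) + gvaD a b y m - gvaDD a b y m := hhigh
      _ = (∑ j ∈ range M, gvaC a b j) - (∑ j ∈ range M, gvaE a b y j)
          + gvaD a b y m - gvaDD a b y m := by rw [hcde]
      _ ≤ (∑ j ∈ range M, gvaC a b j) - (gvaA a b y m - gvaA a b y 0 - gvaE a b y m)
          + gvaD a b y m - gvaDD a b y m := by linarith
      _ = (∑ j ∈ range M, gvaC a b j) - (gvaA a b y m - gvaA a b y 0) - gvaDD a b y m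
          + gvaE a b y m + gvaD a b y m := by ring
lemma gva_div_tendsto_zero (c : ℝ) : Tendsto (fun y : ℝ => c/y) atTop (𝓝 0) := by
  simpa [div_eq_mul_inv] using tendsto_inv_atTop_zero.const_mul c

lemma gva_y_arctan (c : ℝ) : Tendsto (fun y : ℝ => y * Real.arctan (c/y)) atTop (𝓝 c) := by
  rcases eq_or_ne c 0 with rfl | hc
  · have : (fun y : ℝ => y * Real.arctan (0/y)) = fun _ => 0 := by
      funext y; simp
    rw [this]
    simpa using tendsto_const_nhds
  · have hslope : Tendsto (fun t : ℝ => Real.arctan t / t) (𝓝[≠] 0) (𝓝 1) := by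
      have h := Real.hasDerivAt_arctan 0
      rw [hasDerivAt_iff_tendsto_slope] at h
      have heq : (slope Real.arctan 0) = fun t : ℝ => Real.arctan t / t := by
        funext t
        simp [slope_def_field]
      rw [heq] at h
      simpa using h
    have hcy : Tendsto (fun y : ℝ => c/y) atTop (𝓝[≠] (0:ℝ)) := by
      refine tendsto_nhdsWithin_of_tendsto_nhds_of_eventually_within _
        (gva_div_tendsto_zero c) ?_
      filter_upwards [eventually_gt_atTop (0:ℝ)] with y hy0
      exact Set.mem_compl_singleton_iff.mpr (div_ne_zero hc (ne_of_gt hy0))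
    have h2 := (hslope.comp hcy).const_mul c
    rw [mul_one] at h2
    refine h2.congr' ?_
    filter_upwards [eventually_gt_atTop (0:ℝ)] with y hy0
    simp only [Function.comp_apply]
    field_simp

lemma gva_shift_ratio_tendsto {a b : ℝ} (ha : 0 < a) :
    Tendsto (fun t : ℝ => Real.log (b+t) - Real.log (a+t)) atTop (𝓝 0) := by
  have h1 : Tendsto (fun t : ℝ => a + t) atTop atTop :=
    tendsto_atTop_add_const_left atTop a tendsto_id
  have h2 : Tendsto (fun t : ℝ => 1 + (b-a)/(a+t)) atTop (𝓝 1) := by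
    have := (tendsto_inv_atTop_zero.comp h1).const_mul (b-a)
    rw [mul_zero] at this
    have h3 := this.const_add 1
    rw [add_zero] at h3
    refine h3.congr (fun t => ?_)
    simp [Function.comp_apply, div_eq_mul_inv]
  have h4 := ((Real.continuousAt_log one_ne_zero).tendsto).comp h2
  rw [Real.log_one] at h4
  refine h4.congr' ?_
  filter_upwards [h1.eventually_gt_atTop 0, (tendsto_atTop_add_const_left atTop b
    tendsto_id).eventually_gt_atTop 0] with t hat hbt
  simp only [id_eq] at hat hbt
  simp only [Function.comp_apply]
  rw [show (1:ℝ) + (b-a)/(a+t) = (b+t)/(a+t) by field_simp; ring]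
  rw [Real.log_div (ne_of_gt hbt) (ne_of_gt hat)]

lemma gva_w3_tendsto {a : ℝ} (ha : 0 < a) :
    Tendsto (fun t : ℝ => 2*(a+t)*Real.log (1+a/t) - 2*a) atTop (𝓝 0) := by
  have h1 : Tendsto (fun t : ℝ => t * Real.log (1+a/t)) atTop (𝓝 a) :=
    Real.tendsto_mul_log_one_add_div_atTop a
  have h2 : Tendsto (fun t : ℝ => Real.log (1+a/t)) atTop (𝓝 0) := by
    have hx := (gva_div_tendsto_zero a).const_add 1
    rw [add_zero] at hx
    have h0 := ((Real.continuousAt_log one_ne_zero).tendsto).comp hx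
    simpa [Function.comp_def] using h0
  have h3 := ((h1.const_mul 2).add ((h2.const_mul (2*a)))).sub_const (2*a)
  rw [mul_zero, add_zero] at h3
  have h4 : (2:ℝ)*a - 2*a = 0 := by ring
  rw [h4] at h3
  refine h3.congr (fun t => ?_)
  ring

lemma gva_main {a b : ℝ} (ha : 0 < a) (hab : a < b) :
    Tendsto (fun y : ℝ => gvaH a b y - 2*(b-a)*Real.log y) atTop
      (𝓝 (2*Real.log (Real.Gamma a) - 2*Real.log (Real.Gamma b))) := by
  have hb : 0 < b := lt_trans ha hab
  set Mf : ℝ → ℕ := fun y => ⌊y-b⌋₊ with hMfdef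
  have hM : Tendsto Mf atTop atTop := by
    refine tendsto_nat_floor_atTop.comp ?_
    exact tendsto_atTop_add_const_right atTop (-b) tendsto_id
  have hmy : Tendsto (fun y => ((Mf y : ℕ):ℝ)) atTop atTop :=
    tendsto_natCast_atTop_atTop.comp hM
  have hmdivy : Tendsto (fun y => ((Mf y : ℕ):ℝ)/y) atTop (𝓝 1) := by
    have hlo : Tendsto (fun y : ℝ => 1 - (b+1)/y) atTop (𝓝 1) := by
      have := (gva_div_tendsto_zero (b+1)).const_sub 1
      simpa using this
    have hhi : Tendsto (fun y : ℝ => 1 - b/y) atTop (𝓝 1) := by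
      have := (gva_div_tendsto_zero b).const_sub 1
      simpa using this
    refine tendsto_of_tendsto_of_tendsto_of_le_of_le' hlo hhi ?_ ?_
    · filter_upwards [eventually_ge_atTop (b+1)] with y hy
      have hy0 : 0 < y := by linarith
      have h1 : y - b < (Mf y:ℝ) + 1 := Nat.lt_floor_add_one (y-b)
      rw [show (1:ℝ) - (b+1)/y = (y-(b+1))/y by field_simp]
      rw [div_le_div_iff_of_pos_right hy0]
      linarith
    · filter_upwards [eventually_ge_atTop (b+1)] with y hy
      have hy0 : 0 < y := by linarith
      have h1 : (Mf y:ℝ) ≤ y - b := Nat.floor_le (by linarith)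
      rw [show (1:ℝ) - b/y = (y-b)/y by field_simp]
      rw [div_le_div_iff_of_pos_right hy0]
      linarith
  have hmy1 : ∀ᶠ y : ℝ in atTop, (1:ℝ) ≤ ((Mf y : ℕ):ℝ) := by
    filter_upwards [hmy.eventually_ge_atTop 1] with y hy
    exact hy
  -- the W pieces
  have hw1 : Tendsto (fun y : ℝ => 2*y*(Real.arctan (b/y) - Real.arctan (a/y)) - 2*(b-a))
      atTop (𝓝 0) := by
    have h0 := ((gva_y_arctan b).sub (gva_y_arctan a)).const_mul 2
    have h1 := h0.sub_const (2*(b-a))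
    rw [show (2:ℝ)*(b-a) - 2*(b-a) = 0 by ring] at h1
    refine h1.congr (fun y => ?_)
    ring
  have hw2 : Tendsto (fun y : ℝ => b*Real.log (1+(b/y)^2) - a*Real.log (1+(a/y)^2))
      atTop (𝓝 0) := by
    have key : ∀ c : ℝ, Tendsto (fun y : ℝ => Real.log (1+(c/y)^2)) atTop (𝓝 0) := by
      intro c
      have h1 : Tendsto (fun y : ℝ => 1+(c/y)^2) atTop (𝓝 1) := by
        have := ((gva_div_tendsto_zero c).pow 2).const_add 1
        simpa using this
      have h2 := ((Real.continuousAt_log one_ne_zero).tendsto).comp h1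
      simpa [Function.comp_def] using h2
    have := ((key b).const_mul b).sub ((key a).const_mul a)
    simpa using this
  have hw3 : Tendsto (fun y : ℝ => 2*(a+((Mf y:ℕ):ℝ))*Real.log (1+a/((Mf y:ℕ):ℝ)) - 2*a)
      atTop (𝓝 0) := (gva_w3_tendsto ha).comp hmy
  have hw4 : Tendsto (fun y : ℝ => 2*(b+((Mf y:ℕ):ℝ))*Real.log (1+b/((Mf y:ℕ):ℝ)) - 2*b)
      atTop (𝓝 0) := (gva_w3_tendsto hb).comp hmy
  -- gauss term
  have hG : Tendsto (fun y : ℝ => (∑ j ∈ range (Mf y), gvaC a b j)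
      - 2*(b-a)*Real.log ((Mf y : ℕ):ℝ)) atTop
      (𝓝 (2*Real.log (Real.Gamma a) - 2*Real.log (Real.Gamma b))) :=
    (gva_gauss' ha hb).comp hM
  -- e and d at m
  have heM : Tendsto (fun y : ℝ => gvaE a b y ((Mf y:ℕ):ℝ)) atTop (𝓝 0) := by
    have key : ∀ c : ℝ, 0 < c → Tendsto
        (fun y : ℝ => Real.log ((c/y + ((Mf y:ℕ):ℝ)/y)^2+1)) atTop (𝓝 (Real.log 2)) := by
      intro c hc
      have h1 : Tendsto (fun y : ℝ => (c/y + ((Mf y:ℕ):ℝ)/y)^2+1) atTop (𝓝 2) := by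
        have h0 := (((gva_div_tendsto_zero c).add hmdivy).pow 2).add_const 1
        convert h0 using 2
        norm_num
      exact ((Real.continuousAt_log two_ne_zero).tendsto).comp h1
    have h2 := (key b hb).sub (key a ha)
    rw [sub_self] at h2
    refine h2.congr' ?_
    filter_upwards [eventually_gt_atTop (0:ℝ)] with y hy0
    have hsp : ∀ c : ℝ, Real.log ((c+((Mf y:ℕ):ℝ))^2+y^2)
        = Real.log (y^2) + Real.log ((c/y + ((Mf y:ℕ):ℝ)/y)^2+1) := by
      intro c
      rw [← Real.log_mul (by positivity) (by positivity)]
      congr 1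
      field_simp
      try ring
    simp only [gvaE]
    rw [hsp a, hsp b]
    ring
  have hdM : Tendsto (fun y : ℝ => gvaD a b y ((Mf y:ℕ):ℝ)) atTop (𝓝 0) := by
    have h1 : Tendsto (fun y : ℝ => 2*(Real.log (b+((Mf y:ℕ):ℝ)) - Real.log (a+((Mf y:ℕ):ℝ)))
        - gvaE a b y ((Mf y:ℕ):ℝ)) atTop (𝓝 0) := by
      have h0 := ((gva_shift_ratio_tendsto (b := b) ha).comp hmy).const_mul 2
      rw [mul_zero] at h0
      have := h0.sub heM
      rw [sub_zero] at this
      exact this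
    refine h1.congr (fun y => ?_)
    simp only [gvaD, gvaE, Function.comp_apply]
    ring
  -- lower function tendsto
  have hlowf : Tendsto (fun y : ℝ => (∑ j ∈ range (Mf y), gvaC a b j)
      - (gvaA a b y ((Mf y:ℕ):ℝ) - gvaA a b y 0) - gvaDD a b y ((Mf y:ℕ):ℝ)
      - 2*(b-a)*Real.log y) atTop
      (𝓝 (2*Real.log (Real.Gamma a) - 2*Real.log (Real.Gamma b))) := by
    have hcomb := hG.add ((((hw1.add hw2).add hw3).sub hw4))
    rw [show (0:ℝ) + 0 + 0 - 0 = 0 by ring, add_zero] at hcomb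
    refine hcomb.congr' ?_
    filter_upwards [eventually_ge_atTop (b+1), hmy1] with y hy hm1
    have hy0 : 0 < y := by linarith
    have hm0 : (0:ℝ) < ((Mf y:ℕ):ℝ) := by linarith
    set m : ℝ := ((Mf y:ℕ):ℝ)
    have r1 : Real.log (a+m) = Real.log m + Real.log (1+a/m) := by
      rw [← Real.log_mul (ne_of_gt hm0) (by positivity)]
      congr 1
      field_simp
      ring
    have r2 : Real.log (b+m) = Real.log m + Real.log (1+b/m) := by
      rw [← Real.log_mul (ne_of_gt hm0) (by positivity)]
      congr 1
      field_simp
      ring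
    have r3 : Real.log (a^2+y^2) = 2*Real.log y + Real.log (1+(a/y)^2) := by
      rw [show (2:ℝ)*Real.log y = Real.log (y^2) by rw [Real.log_pow]; push_cast; ring]
      rw [← Real.log_mul (by positivity) (by positivity)]
      congr 1
      field_simp
      ring
    have r4 : Real.log (b^2+y^2) = 2*Real.log y + Real.log (1+(b/y)^2) := by
      rw [show (2:ℝ)*Real.log y = Real.log (y^2) by rw [Real.log_pow]; push_cast; ring]
      rw [← Real.log_mul (by positivity) (by positivity)]
      congr 1
      field_simp
      ring
    simp only [gvaA, gvaDD, gvaLam, gvaPhi, add_zero]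
    rw [r1, r2, r3, r4]
    ring
  -- upper function tendsto
  have hupf := hlowf.add (heM.add hdM)
  rw [show (0:ℝ) + 0 = 0 by ring, add_zero] at hupf
  -- squeeze
  refine tendsto_of_tendsto_of_tendsto_of_le_of_le' hlowf hupf ?_ ?_
  · filter_upwards [eventually_ge_atTop (b+1)] with y hy
    have h0 := (gva_bounds ha hab hy).1
    simp only [hMfdef]
    linarith
  · filter_upwards [eventually_ge_atTop (b+1)] with y hy
    have h0 := (gva_bounds ha hab hy).2
    simp only [hMfdef]
    linarith
lemma gva_keyRatio {a b : ℝ} (ha : 0 < a) (hab : a < b) :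
    Tendsto (fun y : ℝ => Real.log (‖Complex.Gamma ((b:ℂ) + y*Complex.I)‖)
      - Real.log (‖Complex.Gamma ((a:ℂ) + y*Complex.I)‖)
      - (b-a)*Real.log y) atTop (𝓝 0) := by
  have h := (gva_main ha hab).sub_const
    (2*Real.log (Real.Gamma a) - 2*Real.log (Real.Gamma b))
  rw [sub_self] at h
  have h2 := h.const_mul (1/2)
  rw [mul_zero] at h2
  refine h2.congr (fun y => ?_)
  simp only [gvaH]
  ring

noncomputable def gvaLT (x : ℝ) : Prop :=
  Tendsto (fun y : ℝ => Real.log (‖Complex.Gamma ((x:ℂ) + y*Complex.I)‖)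
    - ((x-1/2)*Real.log y - Real.pi*y/2 + Real.log (Real.sqrt (2*Real.pi)))) atTop (𝓝 0)

lemma gva_Gamma_ne_zero (x y : ℝ) (hy : y ≠ 0) : Complex.Gamma ((x:ℂ) + y*Complex.I) ≠ 0 := by
  apply Complex.Gamma_ne_zero
  intro m h
  have him : ((x:ℂ) + y*Complex.I).im = y := by simp
  rw [h] at him
  simp at him
  exact hy him.symm

lemma gva_half_formula (y : ℝ) :
    (‖Complex.Gamma (((1:ℝ)/2:ℝ) + y*Complex.I)‖)^2
      = Real.pi / Real.cosh (Real.pi*y) := by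
  set z : ℂ := ((1:ℝ)/2:ℝ) + y*Complex.I with hz
  have h1 : (1:ℂ) - z = (starRingEnd ℂ) z := by
    apply Complex.ext <;> simp [hz] <;> norm_num
  have h2 := Complex.Gamma_mul_Gamma_one_sub z
  rw [h1, Complex.Gamma_conj, Complex.mul_conj, Complex.normSq_eq_norm_sq] at h2
  have h3 : Complex.sin (Real.pi * z) = (Real.cosh (Real.pi*y) : ℝ) := by
    have hpz : (Real.pi : ℂ) * z = (Real.pi/2 : ℂ) + ((Real.pi*y : ℝ):ℂ) * Complex.I := by
      rw [hz]
      push_cast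
      ring
    rw [hpz, Complex.sin_add, Complex.sin_pi_div_two, Complex.cos_pi_div_two,
      Complex.cos_mul_I, ← Complex.ofReal_cosh]
    ring
  rw [h3] at h2
  rw [← Complex.ofReal_div] at h2
  exact_mod_cast h2

lemma gva_LT_half : gvaLT ((1:ℝ)/2) := by
  have hπ : (0:ℝ) < Real.pi := Real.pi_pos
  have hlogG : ∀ y : ℝ, Real.log (‖Complex.Gamma (((1:ℝ)/2:ℝ) + y*Complex.I)‖)
      = (1/2)*(Real.log Real.pi - Real.log (Real.cosh (Real.pi*y))) := by
    intro y
    have habs : 0 < ‖Complex.Gamma (((1:ℝ)/2:ℝ) + y*Complex.I)‖ := by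
      rcases eq_or_ne y 0 with rfl | hy
      · simp only [Complex.ofReal_zero, zero_mul, add_zero]
        refine norm_pos_iff.mpr ?_
        rw [show (((1:ℝ)/2:ℝ):ℂ) = ((1/2 : ℝ):ℂ) by norm_num]
        rw [Complex.Gamma_ofReal]
        simp only [ne_eq, Complex.ofReal_eq_zero]
        exact ne_of_gt (Real.Gamma_pos_of_pos (by norm_num))
      · exact norm_pos_iff.mpr (gva_Gamma_ne_zero _ y hy)
    have h2 : 2*Real.log (‖Complex.Gamma (((1:ℝ)/2:ℝ) + y*Complex.I)‖)
        = Real.log Real.pi - Real.log (Real.cosh (Real.pi*y)) := by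
      rw [show 2*Real.log (‖Complex.Gamma (((1:ℝ)/2:ℝ) + y*Complex.I)‖)
          = Real.log ((‖Complex.Gamma (((1:ℝ)/2:ℝ) + y*Complex.I)‖)^2) by
        rw [Real.log_pow]; push_cast; ring]
      rw [gva_half_formula y, Real.log_div (ne_of_gt hπ) (ne_of_gt (Real.cosh_pos _))]
    linarith
  have hcosh : ∀ u : ℝ, Real.log (Real.cosh u)
      = u + Real.log (1+Real.exp (-(2*u))) - Real.log 2 := by
    intro u
    have h1 : Real.cosh u = Real.exp u * (1+Real.exp (-(2*u))) / 2 := by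
      rw [Real.cosh_eq, show Real.exp (-u) = Real.exp u * Real.exp (-(2*u)) by
        rw [← Real.exp_add]; ring_nf]
      ring
    rw [h1, Real.log_div (by positivity) two_ne_zero,
      Real.log_mul (by positivity) (by positivity), Real.log_exp]
  have hsqrt : Real.log (Real.sqrt (2*Real.pi)) = (1/2)*(Real.log 2 + Real.log Real.pi) := by
    rw [Real.log_sqrt (by positivity), Real.log_mul two_ne_zero (ne_of_gt hπ)]
    ring
  have hexp : Tendsto (fun y : ℝ => Real.exp (-(2*(Real.pi*y)))) atTop (𝓝 0) := by
    refine Real.tendsto_exp_atBot.comp ?_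
    refine tendsto_neg_atTop_atBot.comp ?_
    exact Tendsto.const_mul_atTop two_pos (Tendsto.const_mul_atTop hπ tendsto_id)
  have hmain : Tendsto (fun y : ℝ => -(1/2)*Real.log (1+Real.exp (-(2*(Real.pi*y)))))
      atTop (𝓝 0) := by
    have h1 := hexp.const_add 1
    rw [add_zero] at h1
    have h2 := ((Real.continuousAt_log one_ne_zero).tendsto).comp h1
    rw [Real.log_one] at h2
    have h3 := h2.const_mul (-(1/2) : ℝ)
    rw [mul_zero] at h3
    exact h3
  rw [gvaLT]
  refine hmain.congr (fun y => ?_)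
  rw [hlogG y, hcosh (Real.pi*y), hsqrt]
  ring

lemma gva_LT_pos {x : ℝ} (hx : 0 < x) : gvaLT x := by
  rcases lt_trichotomy x (1/2) with h | h | h
  · have key := gva_keyRatio hx h
    rw [gvaLT]
    have h2 := gva_LT_half.sub key
    rw [sub_zero] at h2
    refine h2.congr (fun y => ?_)
    ring_nf
  · rw [h]; exact gva_LT_half
  · have key := gva_keyRatio (by norm_num : (0:ℝ) < 1/2) h
    rw [gvaLT]
    have h2 := gva_LT_half.add key
    rw [add_zero] at h2
    refine h2.congr (fun y => ?_)
    ring_nf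
lemma gva_LT_step {x : ℝ} (h : gvaLT (x+1)) : gvaLT x := by
  have hcorr : Tendsto (fun y : ℝ => Real.log (‖(x:ℂ)+y*Complex.I‖)
      - Real.log y) atTop (𝓝 0) := by
    have h1 : Tendsto (fun y : ℝ => (1/2)*Real.log ((x/y)^2+1)) atTop (𝓝 0) := by
      have h0 : Tendsto (fun y : ℝ => (x/y)^2+1) atTop (𝓝 1) := by
        have := ((gva_div_tendsto_zero x).pow 2).add_const 1
        simpa using this
      have h2 := ((Real.continuousAt_log one_ne_zero).tendsto).comp h0
      rw [Real.log_one] at h2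
      have h3 := h2.const_mul ((1:ℝ)/2)
      rw [mul_zero] at h3
      exact h3
    refine h1.congr' ?_
    filter_upwards [eventually_gt_atTop (0:ℝ)] with y hy0
    have habs : ‖(x:ℂ)+y*Complex.I‖ = Real.sqrt (x^2+y^2) := by
      rw [Complex.norm_def, Complex.normSq_apply]
      congr 1
      simp
      try ring
    rw [habs, Real.log_sqrt (by positivity)]
    rw [show x^2+y^2 = y^2*((x/y)^2+1) by field_simp; try ring]
    rw [Real.log_mul (by positivity) (by positivity)]
    rw [show Real.log (y^2) = 2*Real.log y by rw [Real.log_pow]; push_cast; ring]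
    ring
  have h2 := h.sub hcorr
  rw [sub_zero] at h2
  rw [gvaLT]
  refine h2.congr' ?_
  filter_upwards [eventually_gt_atTop (0:ℝ)] with y hy0
  have hz : ((x:ℂ)+y*Complex.I) ≠ 0 := by
    intro h0
    have : ((x:ℂ)+y*Complex.I).im = y := by simp
    rw [h0] at this
    simp at this
    exact (ne_of_gt hy0) this.symm
  have hΓ1 : Complex.Gamma (((x+1:ℝ):ℂ) + y*Complex.I)
      = ((x:ℂ)+y*Complex.I) * Complex.Gamma ((x:ℂ)+y*Complex.I) := by
    rw [show (((x+1:ℝ):ℂ) + y*Complex.I) = ((x:ℂ)+y*Complex.I) + 1 by push_cast; ring]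
    exact Complex.Gamma_add_one _ hz
  have hΓne : Complex.Gamma ((x:ℂ)+y*Complex.I) ≠ 0 := gva_Gamma_ne_zero x y (ne_of_gt hy0)
  have hlog : Real.log (‖Complex.Gamma (((x+1:ℝ):ℂ) + y*Complex.I)‖)
      = Real.log (‖(x:ℂ)+y*Complex.I‖)
        + Real.log (‖Complex.Gamma ((x:ℂ)+y*Complex.I)‖) := by
    rw [hΓ1, norm_mul]
    rw [Real.log_mul (ne_of_gt (norm_pos_iff.mpr hz)) (ne_of_gt (norm_pos_iff.mpr hΓne))]
  rw [hlog]
  ring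

lemma gva_LT_all (x : ℝ) : gvaLT x := by
  have key : ∀ n : ℕ, ∀ x : ℝ, 0 < x + n → gvaLT x := by
    intro n
    induction n with
    | zero => intro x hx; rw [Nat.cast_zero, add_zero] at hx; exact gva_LT_pos hx
    | succ n ih =>
      intro x hx
      refine gva_LT_step (ih (x+1) ?_)
      push_cast at hx
      linarith
  obtain ⟨n, hn⟩ := exists_nat_gt (-x)
  exact key n x (by linarith)

lemma gva_T (x : ℝ) : Tendsto (fun y : ℝ =>
    ‖Complex.Gamma ((x:ℂ) + y*Complex.I)‖ /
      (Real.sqrt (2*Real.pi) * y ^ (x-1/2) * Real.exp (-Real.pi*y/2))) atTop (𝓝 1) := by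
  have h := gva_LT_all x
  rw [gvaLT] at h
  have hexp := (Real.continuous_exp.tendsto 0).comp h
  rw [Real.exp_zero] at hexp
  refine hexp.congr' ?_
  filter_upwards [eventually_gt_atTop (0:ℝ)] with y hy0
  simp only [Function.comp_apply]
  have hπ : (0:ℝ) < Real.pi := Real.pi_pos
  have hsq : (0:ℝ) < Real.sqrt (2*Real.pi) := Real.sqrt_pos.mpr (by positivity)
  have hry : (0:ℝ) < y ^ (x-1/2) := Real.rpow_pos_of_pos hy0 _
  have hΓne : Complex.Gamma ((x:ℂ)+y*Complex.I) ≠ 0 := gva_Gamma_ne_zero x y (ne_of_gt hy0)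
  have habs : (0:ℝ) < ‖Complex.Gamma ((x:ℂ)+y*Complex.I)‖ := norm_pos_iff.mpr hΓne
  have hD : Real.log (Real.sqrt (2*Real.pi) * y ^ (x-1/2) * Real.exp (-Real.pi*y/2))
      = (x-1/2)*Real.log y - Real.pi*y/2 + Real.log (Real.sqrt (2*Real.pi)) := by
    rw [Real.log_mul (by positivity) (by positivity),
      Real.log_mul (ne_of_gt hsq) (ne_of_gt hry), Real.log_exp, Real.log_rpow hy0]
    ring
  rw [← hD, ← Real.log_div (ne_of_gt habs) (by positivity), Real.exp_log (by positivity)]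

theorem gamma_vertical_asymptotics (x : ℝ) :
    Tendsto (fun y : ℝ =>
        ‖Complex.Gamma (x + y * Complex.I)‖ /
          (Real.sqrt (2 * Real.pi) * |y| ^ (x - 1 / 2) * Real.exp (-Real.pi * |y| / 2)))
      (cocompact ℝ) (𝓝 1) := by
  set F : ℝ → ℝ := fun y =>
    ‖Complex.Gamma (x + y * Complex.I)‖ /
      (Real.sqrt (2 * Real.pi) * |y| ^ (x - 1 / 2) * Real.exp (-Real.pi * |y| / 2)) with hF
  have hFtop : Tendsto F atTop (𝓝 1) := by
    refine (gva_T x).congr' ?_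
    filter_upwards [eventually_gt_atTop (0:ℝ)] with y hy0
    rw [hF]
    simp only [abs_of_pos hy0]
  have hsym : ∀ y : ℝ, F (-y) = F y := by
    intro y
    have hconj : ((x:ℂ) + ((-y:ℝ):ℂ) * Complex.I) = (starRingEnd ℂ) ((x:ℂ) + y * Complex.I) := by
      apply Complex.ext <;> simp
    rw [hF]
    simp only [hconj, Complex.Gamma_conj, Complex.norm_conj, abs_neg]
  have hFbot : Tendsto F atBot (𝓝 1) := by
    have h1 := hFtop.comp tendsto_neg_atBot_atTop
    refine h1.congr (fun y => ?_)
    simp only [Function.comp_apply, hsym]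
  rw [cocompact_eq_atBot_atTop]
  rw [tendsto_sup]
  exact ⟨hFbot, hFtop⟩
end

section
/- For quaternions p and q with p' := p - Re(p) and q' := q - Re(q) purely imaginary, and q' decomposed as q' = q'₁ + q'₂ with q'₁ parallel to p' and q'₂ orthogonal to p' (with respect to the inner product (z,η) := Re(z·conj(η))), the commutator of powers satisfies, for each 0 < t < 1: [t^(p-1), (1-t)^(q-1)] = t^(p-1)(1-t)^(q-1) - (1-t)^(q-1)t^(p-1) = 2·t^(Re(p)-1)·(1-t)^(Re(q)-1) · (sin|p'·log t| / |p'·log t|) · (sin|q'·log(1-t)| / |q'·log(1-t)|) · (p'·log t)·(q'₂·log(1-t)), provided p'·log t ≠ 0 and q'·log(1-t) ≠ 0. -/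
open Quaternion NormedSpace

lemma anticomm {x y : ℍ[ℝ]} (hx : x.re = 0) (hy : y.re = 0) (h : (x*y).re = 0) :
    x*y + y*x = 0 := by
  have h' : x.imI*y.imI + x.imJ*y.imJ + x.imK*y.imK = 0 := by
    have := h
    simp [Quaternion.re_mul, hx, hy] at this
    linarith
  ext <;> simp [Quaternion.re_mul, Quaternion.imI_mul, Quaternion.imJ_mul, Quaternion.imK_mul, hx, hy] <;> linarith

lemma expPow (p : ℍ[ℝ]) (t : ℝ) (ht0 : 0 < t) :
    exp ((p - 1) * ((Real.log t : ℝ) : ℍ[ℝ]))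
      = (t ^ (p.re - 1)) • (((Real.cos ‖Real.log t • (p - ((p.re:ℝ):ℍ[ℝ]))‖ : ℝ) : ℍ[ℝ])
          + (Real.sin ‖Real.log t • (p - ((p.re:ℝ):ℍ[ℝ]))‖ / ‖Real.log t • (p - ((p.re:ℝ):ℍ[ℝ]))‖)
            • (Real.log t • (p - ((p.re:ℝ):ℍ[ℝ])))) := by
  have him : p - ((p.re:ℝ):ℍ[ℝ]) = p.im := ((eq_sub_iff_add_eq').2 (p.re_add_im)).symm
  have h1 : (p - 1) * ((Real.log t : ℝ) : ℍ[ℝ]) = Real.log t • (p - 1) :=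
    Quaternion.mul_coe_eq_smul _ _
  rw [h1, Quaternion.exp_eq]
  have hre : (Real.log t • (p - 1)).re = Real.log t * (p.re - 1) := by
    simp [Quaternion.re_smul]
  have him2 : (Real.log t • (p - 1)).im = Real.log t • (p - ((p.re:ℝ):ℍ[ℝ])) := by
    rw [him]
    ext <;> simp [Quaternion.re_smul, QuaternionAlgebra.im]
  rw [hre, him2, ← Real.exp_eq_exp_ℝ, ← Real.rpow_def_of_pos ht0]

lemma comm_core (P Q : ℍ[ℝ]) (c1 s1 c2 s2 : ℝ) :
    (((c1:ℝ):ℍ[ℝ]) + s1•P)*(((c2:ℝ):ℍ[ℝ])+s2•Q) - (((c2:ℝ):ℍ[ℝ])+s2•Q)*(((c1:ℝ):ℍ[ℝ])+s1•P)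
      = (s1*s2) • (P*Q - Q*P) := by
  have hc : ∀ r : ℝ, ((r:ℝ):ℍ[ℝ]) = r • (1:ℍ[ℝ]) := fun r => by
    rw [← Quaternion.coe_mul_eq_smul, mul_one]
  simp only [hc, mul_add, add_mul, smul_mul_assoc, mul_smul_comm, one_mul, mul_one,
    smul_smul, smul_sub]
  module

theorem commutator_of_quaternion_powers (p q p' q' q1 q2 : ℍ[ℝ])
    (hp' : p' = p - ((p.re : ℝ) : ℍ[ℝ])) (hq' : q' = q - ((q.re : ℝ) : ℍ[ℝ]))
    (hdec : q' = q1 + q2) (hpar : ∃ c : ℝ, q1 = c • p')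
    (horth : (q2 * star p').re = 0)
    (t : ℝ) (ht0 : 0 < t) (ht1 : t < 1)
    (hpt : Real.log t • p' ≠ 0) (hqt : Real.log (1 - t) • q' ≠ 0) :
    exp ((p - 1) * ((Real.log t : ℝ) : ℍ[ℝ])) *
          exp ((q - 1) * ((Real.log (1 - t) : ℝ) : ℍ[ℝ])) -
        exp ((q - 1) * ((Real.log (1 - t) : ℝ) : ℍ[ℝ])) *
          exp ((p - 1) * ((Real.log t : ℝ) : ℍ[ℝ])) =
      (2 * t ^ (p.re - 1) * (1 - t) ^ (q.re - 1) *
          (Real.sin ‖Real.log t • p'‖ / ‖Real.log t • p'‖) *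
          (Real.sin ‖Real.log (1 - t) • q'‖ / ‖Real.log (1 - t) • q'‖)) •
        ((Real.log t • p') * (Real.log (1 - t) • q2)) := by
  have ht1' : (0:ℝ) < 1 - t := by linarith
  obtain ⟨c, hc⟩ := hpar
  subst hp' hq' hc
  have hP're : (p - ((p.re:ℝ):ℍ[ℝ])).re = 0 := by simp
  have hQ're : (q - ((q.re:ℝ):ℍ[ℝ])).re = 0 := by simp
  have hq2re : q2.re = 0 := by
    have := congrArg QuaternionAlgebra.re hdec
    simp [Quaternion.re_smul] at this
    linarith [this]
  have hre0 : ((p - ((p.re:ℝ):ℍ[ℝ])) * q2).re = 0 := by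
    simp [Quaternion.re_mul, hq2re] at horth ⊢
    linarith
  have hanti := anticomm hP're hq2re hre0
  have hq2anti : q2 * (p - ((p.re:ℝ):ℍ[ℝ])) = -((p - ((p.re:ℝ):ℍ[ℝ])) * q2) :=
    (neg_eq_of_add_eq_zero_right hanti).symm
  rw [expPow p t ht0, expPow q (1-t) ht1']
  have hkey : (Real.log t • (p - ((p.re:ℝ):ℍ[ℝ]))) * (Real.log (1-t) • (q - ((q.re:ℝ):ℍ[ℝ])))
      - (Real.log (1-t) • (q - ((q.re:ℝ):ℍ[ℝ]))) * (Real.log t • (p - ((p.re:ℝ):ℍ[ℝ])))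
      = (2:ℝ) • ((Real.log t • (p - ((p.re:ℝ):ℍ[ℝ]))) * (Real.log (1-t) • q2)) := by
    simp only [hdec, smul_add, add_mul, mul_add, smul_mul_assoc, mul_smul_comm, hq2anti]
    module
  rw [smul_mul_smul_comm, smul_mul_smul_comm,
    mul_comm ((1-t) ^ (q.re - 1)) (t ^ (p.re - 1)), ← smul_sub, comm_core, hkey]
  match_scalars
  ring
end

section
/- For purely imaginary quaternions M and N with M parallel-orthogonal decomposition N = N₁ + N₂ relative to M (N₁ ∈ ℝM, N₂ ⟂ M), one has exp(N)·exp(M) = cos|M|·exp(N) + (sin|M|/|M|)·M·exp(N₁ - N₂) when M ≠ 0. -/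
open Quaternion NormedSpace

lemma anticomm_of_orth (p q : ℍ[ℝ]) (hp : p.re = 0) (hq : q.re = 0)
    (h : (p * q).re = 0) : p * q = -(q * p) := by
  ext
  · simp only [Quaternion.re_neg, Quaternion.re_mul] at h ⊢
    simp [hp, hq] at h ⊢
    linarith
  · simp only [Quaternion.imI_neg, Quaternion.imI_mul]
    simp [hp, hq]; ring
  · simp only [Quaternion.imJ_neg, Quaternion.imJ_mul]
    simp [hp, hq]; ring
  · simp only [Quaternion.imK_neg, Quaternion.imK_mul]
    simp [hp, hq]; ring

lemma exp_mul_of_semiconj (a b c : ℍ[ℝ]) (h : b * a = a * c) :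
    exp b * a = a * exp c := by
  have hpow : ∀ n : ℕ, b ^ n * a = a * c ^ n := by
    intro n
    induction n with
    | zero => simp
    | succ n ih =>
      calc b ^ (n + 1) * a = b ^ n * (b * a) := by rw [pow_succ, mul_assoc]
        _ = b ^ n * a * c := by rw [h, mul_assoc]
        _ = a * c ^ (n + 1) := by rw [ih, pow_succ, mul_assoc]
  rw [exp_eq_tsum ℝ]
  dsimp only
  rw [← tsum_mul_right, ← tsum_mul_left]
  congr 1
  funext n
  rw [smul_mul_assoc, mul_smul_comm, hpow]

theorem exp_mul_exp_of_imaginary (M N N1 N2 : ℍ[ℝ])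
    (hM : M.re = 0) (hN : N.re = 0) (hM0 : M ≠ 0)
    (hdec : N = N1 + N2) (hpar : ∃ c : ℝ, N1 = c • M)
    (horth : (N2 * star M).re = 0) :
    NormedSpace.exp N * NormedSpace.exp M =
      Real.cos ‖M‖ • NormedSpace.exp N +
        (Real.sin ‖M‖ / ‖M‖) • (M * NormedSpace.exp (N1 - N2)) := by
  obtain ⟨c, hc⟩ := hpar
  have hN2re : N2.re = 0 := by
    have : N2 = N - N1 := by rw [hdec]; abel
    rw [this, hc]
    simp [hN, hM]
  have hstar : star M = -M := by
    ext <;> simp [hM]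
  have horth' : (N2 * M).re = 0 := by
    rw [hstar, mul_neg] at horth
    simp only [Quaternion.re_neg] at horth
    linarith
  have hanti : N2 * M = -(M * N2) := anticomm_of_orth N2 M hN2re hM horth'
  have hsemi : N * M = M * (N1 - N2) := by
    rw [hdec, add_mul, mul_sub, hc, smul_mul_assoc, mul_smul_comm, hanti]
    rw [sub_eq_add_neg]
  have hkey : exp N * M = M * exp (N1 - N2) :=
    exp_mul_of_semiconj M N (N1 - N2) hsemi
  rw [exp_of_re_eq_zero M hM, mul_add, Quaternion.mul_coe_eq_smul,
    mul_smul_comm, hkey]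
end

section
/- Fubini-type factorization for quaternion-valued Gamma integrals: for quaternions p, q with Re(p) > 0 and Re(q) > 0, Γ(p)·Γ(q) = lim_{R→∞} ∬_{T_R} e^{-x-y}·x^{p-1}·y^{q-1} dx dy, where T_R = {(x,y) : x ≥ 0, y ≥ 0, x + y ≤ R} and Γ(z) := ∫₀^∞ e^{-t}·t^{z-1} dt. -/
open Quaternion NormedSpace MeasureTheory Filter Topology

/-- The quaternionic Gamma function for `Re z > 0`, as a Bochner integral. -/
noncomputable def qGamma (z : ℍ[ℝ]) : ℍ[ℝ] :=
  ∫ t in Set.Ioi (0 : ℝ), Real.exp (-t) • NormedSpace.exp ((z - 1) * ((Real.log t : ℝ) : ℍ[ℝ]))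

namespace QGammaAux

noncomputable def f (p : ℍ[ℝ]) (x : ℝ) : ℍ[ℝ] :=
  Real.exp (-x) • NormedSpace.exp ((p - 1) * ((Real.log x : ℝ) : ℍ[ℝ]))

lemma qGamma_eq (p : ℍ[ℝ]) : qGamma p = ∫ t in Set.Ioi (0 : ℝ), f p t := rfl

lemma norm_f {p : ℍ[ℝ]} {x : ℝ} (hx : 0 < x) :
    ‖f p x‖ = Real.exp (-x) * x ^ (p.re - 1) := by
  rw [f, norm_smul, Real.norm_eq_abs, abs_of_pos (Real.exp_pos _)]
  congr 1
  rw [Quaternion.norm_exp]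
  have hre : ((p - 1) * ((Real.log x : ℝ) : ℍ[ℝ])).re = Real.log x * (p.re - 1) := by
    rw [Quaternion.mul_coe_eq_smul]
    simp [Quaternion.re_smul]
  rw [hre, ← Real.exp_eq_exp_ℝ, Real.norm_eq_abs, abs_of_pos (Real.exp_pos _),
    Real.rpow_def_of_pos hx]

lemma continuousOn_f (p : ℍ[ℝ]) : ContinuousOn (f p) (Set.Ioi (0 : ℝ)) := by
  refine ContinuousOn.smul (f := fun x : ℝ => Real.exp (-x))
    (g := fun x : ℝ => NormedSpace.exp ((p - 1) * ((Real.log x : ℝ) : ℍ[ℝ]))) ?_ ?_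
  · exact (Real.continuous_exp.comp continuous_neg).continuousOn
  · apply (show Continuous (NormedSpace.exp : ℍ[ℝ] → ℍ[ℝ]) from by
      letI : NormedAlgebra ℚ ℍ[ℝ] := NormedAlgebra.restrictScalars ℚ ℝ ℍ[ℝ]
      exact NormedSpace.exp_continuous).comp_continuousOn
    apply ContinuousOn.mul continuousOn_const
    exact (continuous_coe.comp_continuousOn
      (Real.continuousOn_log.mono fun x hx => ne_of_gt hx))

lemma integrable_f {p : ℍ[ℝ]} (hp : 0 < p.re) :
    IntegrableOn (f p) (Set.Ioi (0 : ℝ)) := by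
  have hbase := Real.GammaIntegral_convergent hp
  refine hbase.mono' ((continuousOn_f p).aestronglyMeasurable measurableSet_Ioi) ?_
  filter_upwards [ae_restrict_mem measurableSet_Ioi] with x hx
  rw [norm_f hx]

lemma integrable_mul_prod {α β : Type*} [MeasurableSpace α] [MeasurableSpace β]
    {μ : Measure α} {ν : Measure β} [SigmaFinite ν]
    {f : α → ℍ[ℝ]} {g : β → ℍ[ℝ]} (hf : Integrable f μ) (hg : Integrable g ν) :
    Integrable (fun z : α × β => f z.1 * g z.2) (μ.prod ν) := by
  refine (hf.norm.mul_prod hg.norm).mono'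
    (hf.aestronglyMeasurable.comp_fst.mul hg.aestronglyMeasurable.comp_snd) ?_
  filter_upwards with z
  exact norm_mul_le (f z.1) (g z.2)

lemma integral_mul_prod {α β : Type*} [MeasurableSpace α] [MeasurableSpace β]
    {μ : Measure α} {ν : Measure β} [SigmaFinite μ] [SigmaFinite ν]
    {f : α → ℍ[ℝ]} {g : β → ℍ[ℝ]} (hf : Integrable f μ) (hg : Integrable g ν) :
    ∫ z : α × β, f z.1 * g z.2 ∂μ.prod ν = (∫ x, f x ∂μ) * ∫ y, g y ∂ν := by
  rw [MeasureTheory.integral_prod _ (integrable_mul_prod hf hg)]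
  have h1 : ∀ x, ∫ y, f x * g y ∂ν = f x * ∫ y, g y ∂ν := fun x =>
    (ContinuousLinearMap.mul ℝ ℍ[ℝ] (f x)).integral_comp_comm hg
  simp_rw [h1]
  exact ((ContinuousLinearMap.mul ℝ ℍ[ℝ]).flip (∫ y, g y ∂ν)).integral_comp_comm hf

end QGammaAux

open QGammaAux in
theorem gamma_mul_gamma_eq_lim_triangle_integral (p q : ℍ[ℝ])
    (hp : 0 < p.re) (hq : 0 < q.re) :
    Tendsto (fun R : ℝ =>
        ∫ v in {v : ℝ × ℝ | 0 ≤ v.1 ∧ 0 ≤ v.2 ∧ v.1 + v.2 ≤ R},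
          Real.exp (-(v.1 + v.2)) •
            (NormedSpace.exp ((p - 1) * ((Real.log v.1 : ℝ) : ℍ[ℝ])) *
              NormedSpace.exp ((q - 1) * ((Real.log v.2 : ℝ) : ℍ[ℝ]))))
      atTop (𝓝 (qGamma p * qGamma q)) := by
  set h : ℝ × ℝ → ℍ[ℝ] := fun v => f p v.1 * f q v.2 with hh
  have hfun : (fun v : ℝ × ℝ =>
      Real.exp (-(v.1 + v.2)) •
        (NormedSpace.exp ((p - 1) * ((Real.log v.1 : ℝ) : ℍ[ℝ])) *
          NormedSpace.exp ((q - 1) * ((Real.log v.2 : ℝ) : ℍ[ℝ])))) = h := by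
    funext v
    simp only [hh, f, smul_mul_smul_comm, neg_add, Real.exp_add]
  -- the restricted product measure
  have hrestr : (volume : Measure (ℝ × ℝ)).restrict (Set.Ioi 0 ×ˢ Set.Ioi 0) =
      ((volume : Measure ℝ).restrict (Set.Ioi 0)).prod
        ((volume : Measure ℝ).restrict (Set.Ioi 0)) := by
    rw [Measure.volume_eq_prod, Measure.prod_restrict]
  have hInt : IntegrableOn h (Set.Ioi (0:ℝ) ×ˢ Set.Ioi (0:ℝ)) := by
    rw [IntegrableOn, hrestr]
    exact integrable_mul_prod (integrable_f hp) (integrable_f hq)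
  have hval : ∫ v in Set.Ioi (0:ℝ) ×ˢ Set.Ioi (0:ℝ), h v = qGamma p * qGamma q := by
    rw [show (∫ v in Set.Ioi (0:ℝ) ×ˢ Set.Ioi (0:ℝ), h v) =
        ∫ v, h v ∂((volume : Measure (ℝ × ℝ)).restrict (Set.Ioi 0 ×ˢ Set.Ioi 0)) from rfl,
      hrestr, qGamma_eq, qGamma_eq]
    exact integral_mul_prod (integrable_f hp) (integrable_f hq)
  -- the sets
  set S : ℝ → Set (ℝ × ℝ) := fun R => {v : ℝ × ℝ | 0 ≤ v.1 ∧ 0 ≤ v.2 ∧ v.1 + v.2 ≤ R} with hS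
  have hSm : ∀ R, MeasurableSet (S R) := by
    intro R
    have : S R = {v : ℝ × ℝ | 0 ≤ v.1} ∩ ({v : ℝ × ℝ | 0 ≤ v.2} ∩ {v | v.1 + v.2 ≤ R}) := by
      ext v; simp [hS, and_assoc]
    rw [this]
    exact (measurableSet_le measurable_const measurable_fst).inter
      ((measurableSet_le measurable_const measurable_snd).inter
        (measurableSet_le (measurable_fst.add measurable_snd) measurable_const))
  have hmono : Monotone S := by
    intro a b hab v hv
    exact ⟨hv.1, hv.2.1, hv.2.2.trans hab⟩
  have hUnion : ⋃ R : ℝ, S R = Set.Ici (0:ℝ) ×ˢ Set.Ici (0:ℝ) := by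
    ext v
    simp only [Set.mem_iUnion, hS, Set.mem_setOf_eq, Set.mem_prod, Set.mem_Ici]
    constructor
    · rintro ⟨R, h1, h2, _⟩; exact ⟨h1, h2⟩
    · rintro ⟨h1, h2⟩; exact ⟨v.1 + v.2, h1, h2, le_rfl⟩
  -- Ici × Ici is a.e. equal to Ioi × Ioi
  have haeq : (Set.Ici (0:ℝ) ×ˢ Set.Ici (0:ℝ) : Set (ℝ × ℝ)) =ᵐ[volume]
      (Set.Ioi (0:ℝ) ×ˢ Set.Ioi (0:ℝ) : Set (ℝ × ℝ)) := by
    rw [MeasureTheory.ae_eq_set]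
    constructor
    · refine measure_mono_null (t := ({(0:ℝ)} ×ˢ (Set.univ : Set ℝ)) ∪
        ((Set.univ : Set ℝ) ×ˢ {(0:ℝ)})) ?_ ?_
      · rintro ⟨x, y⟩ ⟨⟨hx, hy⟩, hn⟩
        simp only [Set.mem_prod, Set.mem_Ioi, not_and_or, not_lt] at hn
        rcases hn with hn | hn
        · left; exact ⟨le_antisymm hn hx, trivial⟩
        · right; exact ⟨trivial, le_antisymm hn hy⟩
      · apply measure_union_null
        · rw [Measure.volume_eq_prod, Measure.prod_prod]
          simp
        · rw [Measure.volume_eq_prod, Measure.prod_prod]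
          simp
    · refine measure_mono_null (t := (∅ : Set (ℝ × ℝ))) ?_ ?_
      · rintro ⟨x, y⟩ ⟨⟨hx, hy⟩, hn⟩
        exact absurd ⟨Set.mem_Ici.2 (le_of_lt (Set.mem_Ioi.1 hx)), Set.mem_Ici.2 (le_of_lt (Set.mem_Ioi.1 hy))⟩ hn
      · exact measure_empty
  have hrestr2 : (volume : Measure (ℝ × ℝ)).restrict (⋃ R : ℝ, S R) =
      (volume : Measure (ℝ × ℝ)).restrict (Set.Ioi 0 ×ˢ Set.Ioi 0) := by
    rw [hUnion]
    exact Measure.restrict_congr_set haeq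
  have hIntU : IntegrableOn h (⋃ R : ℝ, S R) := by
    rw [IntegrableOn, hrestr2]; exact hInt
  have := tendsto_setIntegral_of_monotone hSm hmono hIntU
  rw [show (∫ v in ⋃ R : ℝ, S R, h v) =
      ∫ v, h v ∂((volume : Measure (ℝ × ℝ)).restrict (⋃ R : ℝ, S R)) from rfl,
    hrestr2] at this
  rw [hfun]
  convert this using 2
  exact hval.symm
end

section
/- Hankel's formula: 1/Γ(z) = (1/(2πi)) · ∮_ψ e^ζ · ζ^{-z} dζ for every complex z, where ψ is a contour starting at -∞ below the negative real axis, encircling 0 once counterclockwise, and returning to -∞ above the negative real axis, and ζ^{-z} takes its principal branch. -/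
open Filter Topology Real Set MeasureTheory intervalIntegral

noncomputable section HankelAux

/-- integrand on the two horizontal edges of the Hankel contour -/
def lineF (z : ℂ) (u : ℝ) : ℂ :=
  Complex.exp (-(u : ℂ)) *
    (Complex.exp (-z * ((Real.log u : ℂ) - Real.pi * Complex.I)) -
      Complex.exp (-z * ((Real.log u : ℂ) + Real.pi * Complex.I)))

/-- integrand on the circle piece of the Hankel contour -/
def circF (z : ℂ) (δ θ : ℝ) : ℂ :=
  Complex.exp ((δ : ℂ) * Complex.exp (θ * Complex.I)) *
    Complex.exp (-z * ((Real.log δ : ℂ) + θ * Complex.I)) *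
    ((δ : ℂ) * Complex.I * Complex.exp (θ * Complex.I))

def circInt (z : ℂ) (δ : ℝ) : ℂ := ∫ θ in (-Real.pi)..Real.pi, circF z δ θ

/-- `e^{iπz} - e^{-iπz} = 2i sin(πz)` -/
def cc (z : ℂ) : ℂ :=
  Complex.exp (Real.pi * Complex.I * z) - Complex.exp (-(Real.pi * Complex.I * z))

/-- `e^{-u} u^w` with principal real log -/
def mm (w : ℂ) (u : ℝ) : ℂ := Complex.exp (-(u : ℂ)) * Complex.exp (w * (Real.log u : ℂ))

/-- `∂/∂δ` of the circle integrand (also `∂/∂θ` of `Qf`) -/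
def Fd (z : ℂ) (δ θ : ℝ) : ℂ :=
  Complex.I * Complex.exp (θ * Complex.I) *
    (Complex.exp ((δ : ℂ) * Complex.exp (θ * Complex.I)) *
      Complex.exp (-z * ((Real.log δ : ℂ) + θ * Complex.I)) *
      ((δ : ℂ) * Complex.exp (θ * Complex.I) - z + 1))

def Qf (z : ℂ) (δ θ : ℝ) : ℂ :=
  Complex.exp (θ * Complex.I) *
    (Complex.exp ((δ : ℂ) * Complex.exp (θ * Complex.I)) *
      Complex.exp (-z * ((Real.log δ : ℂ) + θ * Complex.I)))

lemma lineF_eq (z : ℂ) (u : ℝ) : lineF z u = cc z * mm (-z) u := by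
  unfold lineF cc mm
  have h1 : -z * ((Real.log u : ℂ) - Real.pi * Complex.I)
      = (Real.pi * Complex.I * z) + (-z) * (Real.log u : ℂ) := by ring
  have h2 : -z * ((Real.log u : ℂ) + Real.pi * Complex.I)
      = (-(Real.pi * Complex.I * z)) + (-z) * (Real.log u : ℂ) := by ring
  rw [h1, h2, Complex.exp_add, Complex.exp_add]
  ring

lemma cc_sub_one (z : ℂ) : cc (z - 1) = -cc z := by
  unfold cc
  have h1 : Real.pi * Complex.I * (z - 1) = Real.pi * Complex.I * z + -(Real.pi * Complex.I) := by
    ring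
  rw [h1, neg_add, neg_neg, Complex.exp_add, Complex.exp_add, Complex.exp_pi_mul_I,
    Complex.exp_neg, Complex.exp_pi_mul_I]
  field_simp
  ring

lemma cc_eq_sin (z : ℂ) : cc z = 2 * Complex.I * Complex.sin (Real.pi * z) := by
  rw [Complex.sin]
  unfold cc
  have h1 : -(Real.pi * z) * Complex.I = -(Real.pi * Complex.I * z) := by ring
  have h2 : (Real.pi * z) * Complex.I = Real.pi * Complex.I * z := by ring
  rw [h1, h2]
  ring_nf
  simp [Complex.I_sq]
  ring

lemma continuousOn_mm (w : ℂ) : ContinuousOn (mm w) (Ioi (0:ℝ)) := by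
  unfold mm
  apply ContinuousOn.mul
  · exact (Complex.continuous_exp.comp (Complex.continuous_ofReal.neg)).continuousOn
  · apply Complex.continuous_exp.comp_continuousOn
    apply ContinuousOn.mul continuousOn_const
    exact Complex.continuous_ofReal.comp_continuousOn
      (Real.continuousOn_log.mono (fun x hx => ne_of_gt (mem_Ioi.mp hx)))

lemma integrableOn_mm {z : ℂ} (hz : z.re < 1) : IntegrableOn (mm (-z)) (Ioi (0:ℝ)) := by
  have h := Complex.GammaIntegral_convergent (s := 1 - z) (by simpa using by linarith)
  apply h.congr_fun _ measurableSet_Ioi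
  intro x hx
  have hx' : (0:ℝ) < x := hx
  unfold mm
  simp only
  rw [Complex.ofReal_exp, show ((-x : ℝ) : ℂ) = -(x:ℂ) by push_cast; ring]
  congr 1
  rw [show (1:ℂ) - z - 1 = -z by ring]
  rw [Complex.cpow_def_of_ne_zero (by exact_mod_cast hx'.ne'), ← Complex.ofReal_log hx'.le]
  ring_nf

lemma gamma_one_sub {z : ℂ} (hz : z.re < 1) :
    Complex.Gamma (1 - z) = ∫ u in Ioi (0:ℝ), mm (-z) u := by
  rw [Complex.Gamma_eq_integral (by simpa using by linarith), Complex.GammaIntegral]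
  apply setIntegral_congr_fun measurableSet_Ioi
  intro x hx
  have hx' : (0:ℝ) < x := hx
  unfold mm
  simp only
  rw [Complex.ofReal_exp, show ((-x : ℝ) : ℂ) = -(x:ℂ) by push_cast; ring]
  congr 1
  rw [show (1:ℂ) - z - 1 = -z by ring]
  rw [Complex.cpow_def_of_ne_zero (by exact_mod_cast hx'.ne'), ← Complex.ofReal_log hx'.le]
  ring_nf

lemma hasDerivAt_circF_delta (z : ℂ) (θ : ℝ) {δ : ℝ} (hδ : 0 < δ) :
    HasDerivAt (fun t : ℝ => circF z t θ) (Fd z δ θ) δ := by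
  set w : ℂ := Complex.exp (θ * Complex.I) with hw
  have h0 : HasDerivAt (fun t : ℝ => (t : ℂ)) 1 δ := Complex.ofRealCLM.hasDerivAt
  have hA : HasDerivAt (fun t : ℝ => Complex.exp ((t : ℂ) * w))
      (Complex.exp ((δ : ℂ) * w) * w) δ := by
    simpa using (h0.mul_const w).cexp
  have hL : HasDerivAt (fun t : ℝ => ((Real.log t : ℝ) : ℂ)) ((δ⁻¹ : ℝ) : ℂ) δ :=
    (Real.hasDerivAt_log hδ.ne').ofReal_comp
  have hB : HasDerivAt (fun t : ℝ => Complex.exp (-z * ((Real.log t : ℂ) + θ * Complex.I)))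
      (Complex.exp (-z * ((Real.log δ : ℂ) + θ * Complex.I)) * (-z * ((δ⁻¹ : ℝ) : ℂ))) δ :=
    ((hL.add_const ((θ : ℂ) * Complex.I)).const_mul (-z)).cexp
  have hC : HasDerivAt (fun t : ℝ => (t : ℂ) * Complex.I * w) (Complex.I * w) δ := by
    simpa using (h0.mul_const Complex.I).mul_const w
  have := (hA.mul hB).mul hC
  have hδ' : ((δ : ℝ) : ℂ) ≠ 0 := by exact_mod_cast hδ.ne'
  refine this.congr_deriv (Eq.symm ?_)
  simp only [Pi.mul_apply]
  unfold Fd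
  rw [hw]
  push_cast
  field_simp
  ring

lemma hasDerivAt_Qf (z : ℂ) (δ : ℝ) (θ : ℝ) :
    HasDerivAt (fun t : ℝ => Qf z δ t) (Fd z δ θ) θ := by
  have h0 : HasDerivAt (fun t : ℝ => (t : ℂ)) 1 θ := Complex.ofRealCLM.hasDerivAt
  have he : HasDerivAt (fun t : ℝ => Complex.exp ((t : ℂ) * Complex.I))
      (Complex.exp ((θ : ℂ) * Complex.I) * Complex.I) θ := by
    simpa using (h0.mul_const Complex.I).cexp
  have hA : HasDerivAt (fun t : ℝ => Complex.exp ((δ : ℂ) * Complex.exp ((t : ℂ) * Complex.I)))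
      (Complex.exp ((δ : ℂ) * Complex.exp ((θ : ℂ) * Complex.I)) *
        ((δ : ℂ) * (Complex.exp ((θ : ℂ) * Complex.I) * Complex.I))) θ :=
    (he.const_mul ((δ : ℂ))).cexp
  have hB : HasDerivAt (fun t : ℝ => Complex.exp (-z * ((Real.log δ : ℂ) + (t : ℂ) * Complex.I)))
      (Complex.exp (-z * ((Real.log δ : ℂ) + (θ : ℂ) * Complex.I)) * (-z * Complex.I)) θ := by
    have : HasDerivAt (fun t : ℝ => -z * ((Real.log δ : ℂ) + (t : ℂ) * Complex.I))
        (-z * Complex.I) θ := by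
      simpa using ((h0.mul_const Complex.I).const_add ((Real.log δ : ℂ))).const_mul (-z)
    exact this.cexp
  have := he.mul (hA.mul hB)
  refine this.congr_deriv (Eq.symm ?_)
  simp only [Pi.mul_apply]
  unfold Fd
  ring

lemma continuous_Fd (z : ℂ) (δ : ℝ) : Continuous (fun θ : ℝ => Fd z δ θ) := by
  unfold Fd
  fun_prop

lemma continuous_circF_theta (z : ℂ) (δ : ℝ) : Continuous (fun θ : ℝ => circF z δ θ) := by
  unfold circF
  fun_prop

lemma integral_Fd (z : ℂ) (δ : ℝ) :
    ∫ θ in (-Real.pi)..Real.pi, Fd z δ θ = lineF z δ := by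
  rw [intervalIntegral.integral_eq_sub_of_hasDerivAt
    (fun θ _ => hasDerivAt_Qf z δ θ) ((continuous_Fd z δ).intervalIntegrable _ _)]
  unfold Qf lineF
  push_cast
  have h1 : Complex.exp (-(Real.pi:ℂ) * Complex.I) = -1 := by
    rw [neg_mul, Complex.exp_neg, Complex.exp_pi_mul_I]; norm_num
  rw [h1, Complex.exp_pi_mul_I]
  rw [show (δ:ℂ) * (-1:ℂ) = -(δ:ℂ) by ring,
    show (Real.log δ:ℂ) + -(Real.pi:ℂ) * Complex.I
      = (Real.log δ:ℂ) - (Real.pi:ℂ) * Complex.I by ring]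
  ring

lemma hasDerivAt_circInt (z : ℂ) {δ : ℝ} (hδ : 0 < δ) :
    HasDerivAt (fun t : ℝ => circInt z t) (lineF z δ) δ := by
  have hcont : ContinuousOn (fun p : ℝ × ℝ => Fd z p.1 p.2) {p : ℝ × ℝ | p.1 ≠ 0} := by
    have hlog : ContinuousOn (fun p : ℝ × ℝ => ((Real.log p.1 : ℝ) : ℂ))
        {p : ℝ × ℝ | p.1 ≠ 0} :=
      Complex.continuous_ofReal.comp_continuousOn
        (Real.continuousOn_log.comp continuous_fst.continuousOn (fun p hp => hp))
    unfold Fd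
    refine ContinuousOn.mul (Continuous.continuousOn (by fun_prop)) ?_
    refine ContinuousOn.mul (ContinuousOn.mul (Continuous.continuousOn (by fun_prop)) ?_)
      (Continuous.continuousOn (by fun_prop))
    exact Complex.continuous_exp.comp_continuousOn
      (continuousOn_const.mul (hlog.add (Continuous.continuousOn (by fun_prop))))
  obtain ⟨C, hC⟩ : ∃ C, ∀ p ∈ (Icc (δ/2) (δ + δ/2) ×ˢ Icc (-Real.pi) Real.pi),
      ‖(fun p : ℝ × ℝ => Fd z p.1 p.2) p‖ ≤ C := by
    apply (isCompact_Icc.prod isCompact_Icc).exists_bound_of_continuousOn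
    apply hcont.mono
    rintro ⟨t, θ⟩ ⟨ht, -⟩
    have : (0:ℝ) < t := lt_of_lt_of_le (by linarith) ht.1
    exact this.ne'
  have key := intervalIntegral.hasDerivAt_integral_of_dominated_loc_of_deriv_le
    (𝕜 := ℝ) (μ := volume) (F := fun t θ => circF z t θ) (F' := fun t θ => Fd z t θ)
    (x₀ := δ) (a := -Real.pi) (b := Real.pi) (bound := fun _ => C)
    (Metric.ball_mem_nhds δ (half_pos hδ))
    (Eventually.of_forall fun t => (continuous_circF_theta z t).aestronglyMeasurable.restrict)
    ((continuous_circF_theta z δ).intervalIntegrable _ _)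
    ((continuous_Fd z δ).aestronglyMeasurable.restrict)
    ?_ (intervalIntegrable_const) ?_
  · have := key.2
    rwa [integral_Fd z δ] at this
  · refine ae_of_all _ fun θ hθ t ht => ?_
    rw [Set.uIoc_of_le (by linarith [Real.pi_pos])] at hθ
    rw [Metric.mem_ball, Real.dist_eq] at ht
    have h1 := abs_lt.mp ht
    exact hC (t, θ) ⟨⟨by linarith [h1.1], by linarith [h1.2]⟩, ⟨hθ.1.le, hθ.2⟩⟩
  · refine ae_of_all _ fun θ hθ t ht => ?_
    rw [Metric.mem_ball, Real.dist_eq] at ht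
    have h1 := abs_lt.mp ht
    exact hasDerivAt_circF_delta z θ (by linarith [(abs_lt.mp ht).1])

lemma hasDerivAt_tail {z : ℂ} (hz : z.re < 1) {t0 : ℝ} (ht0 : 0 < t0) :
    HasDerivAt (fun t : ℝ => ∫ u in Ioi t, mm (-z) u) (-(mm (-z) t0)) t0 := by
  have hInt : IntegrableOn (mm (-z)) (Ioi (t0/2)) :=
    (integrableOn_mm hz).mono_set (Ioi_subset_Ioi (by linarith))
  have hloc : ∀ t ∈ Ioi (t0/2), (∫ u in Ioi t, mm (-z) u)
      = (∫ u in Ioi (t0/2), mm (-z) u) - ∫ u in (t0/2)..t, mm (-z) u := by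
    intro t ht
    rw [intervalIntegral.integral_of_le (le_of_lt ht)]
    rw [← Ioc_union_Ioi_eq_Ioi (le_of_lt (mem_Ioi.mp ht)),
      setIntegral_union Ioc_disjoint_Ioi_same measurableSet_Ioi
        (hInt.mono_set Ioc_subset_Ioi_self)
        (hInt.mono_set (Ioi_subset_Ioi (le_of_lt ht)))]
    ring
  have hd : HasDerivAt (fun t => (∫ u in Ioi (t0/2), mm (-z) u) - ∫ u in (t0/2)..t, mm (-z) u)
      (-(mm (-z) t0)) t0 := by
    apply HasDerivAt.const_sub
    apply intervalIntegral.integral_hasDerivAt_right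
    · exact ((continuousOn_mm (-z)).mono (fun x hx => lt_of_lt_of_le (half_pos ht0)
        (by rw [uIcc_of_le (by linarith)] at hx; exact hx.1))).intervalIntegrable
    · exact ContinuousOn.stronglyMeasurableAtFilter isOpen_Ioi (continuousOn_mm (-z)) t0 ht0
    · exact (continuousOn_mm (-z)).continuousAt (Ioi_mem_nhds ht0)
  exact hd.congr_of_eventuallyEq (eventuallyEq_of_mem (Ioi_mem_nhds (half_lt_self ht0)) hloc)

lemma norm_circF_le (z : ℂ) {t : ℝ} (ht : 0 < t) {θ : ℝ} (hθ : θ ∈ Set.Icc (-Real.pi) Real.pi) :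
    ‖circF z t θ‖ ≤ Real.exp t * Real.exp (Real.pi * |z.im|) * t ^ (1 - z.re) := by
  have e1 : ((t:ℂ) * Complex.exp (θ * Complex.I)).re = t * Real.cos θ := by
    simp [Complex.mul_re, Complex.exp_ofReal_mul_I_re, Complex.exp_ofReal_mul_I_im]
  have e2 : (-z * ((Real.log t : ℂ) + θ * Complex.I)).re
      = z.im * θ + -(z.re * Real.log t) := by
    simp [Complex.mul_re, Complex.add_re, Complex.add_im]
    ring
  have e3 : ‖(t:ℂ) * Complex.I * Complex.exp (θ * Complex.I)‖ = t := by
    simp [Complex.norm_exp, abs_of_pos ht]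
  have hnorm : ‖circF z t θ‖
      = Real.exp (t * Real.cos θ) * (Real.exp (z.im * θ) * Real.exp (-(z.re * Real.log t))) * t := by
    unfold circF
    rw [norm_mul, norm_mul, Complex.norm_exp,
      Complex.norm_exp, e1, e2, e3, Real.exp_add]
  rw [hnorm]
  have h1 : t ^ (1 - z.re) = t * Real.exp (-(z.re * Real.log t)) := by
    rw [Real.rpow_def_of_pos ht, show Real.log t * (1 - z.re) = Real.log t + -(z.re * Real.log t)
      by ring, Real.exp_add, Real.exp_log ht]
  rw [h1, show Real.exp t * Real.exp (Real.pi * |z.im|) * (t * Real.exp (-(z.re * Real.log t)))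
    = Real.exp t * (Real.exp (Real.pi * |z.im|) * Real.exp (-(z.re * Real.log t))) * t by ring]
  have hc : t * Real.cos θ ≤ t := by
    nlinarith [Real.cos_le_one θ, ht.le]
  have hθ' : z.im * θ ≤ Real.pi * |z.im| := by
    calc z.im * θ ≤ |z.im * θ| := le_abs_self _
    _ = |z.im| * |θ| := abs_mul _ _
    _ ≤ |z.im| * Real.pi := by
        apply mul_le_mul_of_nonneg_left _ (abs_nonneg _)
        exact abs_le.mpr ⟨hθ.1, hθ.2⟩
    _ = Real.pi * |z.im| := mul_comm _ _
  gcongr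

lemma norm_circInt_le (z : ℂ) {t : ℝ} (ht : 0 < t) :
    ‖circInt z t‖ ≤ Real.exp t * Real.exp (Real.pi * |z.im|) * t ^ (1 - z.re) * (2 * Real.pi) := by
  have h2 : |Real.pi - -Real.pi| = 2 * Real.pi := by
    rw [sub_neg_eq_add, ← two_mul, abs_of_pos (by positivity)]
  have := intervalIntegral.norm_integral_le_of_norm_le_const
    (C := Real.exp t * Real.exp (Real.pi * |z.im|) * t ^ (1 - z.re))
    (f := fun θ => circF z t θ) (a := -Real.pi) (b := Real.pi) ?_
  · rw [h2] at this
    exact this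
  · intro x hx
    rw [Set.uIoc_of_le (by linarith [Real.pi_pos])] at hx
    exact norm_circF_le z ht ⟨hx.1.le, hx.2⟩

lemma base_identity {z : ℂ} (hz : z.re < 1) {δ : ℝ} (hδ : 0 < δ) :
    cc z * (∫ u in Ioi δ, mm (-z) u) + circInt z δ
      = 2 * Real.pi * Complex.I * (Complex.Gamma z)⁻¹ := by
  set Φ : ℝ → ℂ := fun t => cc z * (∫ u in Ioi t, mm (-z) u) + circInt z t with hΦ
  have hderiv : ∀ t : ℝ, 0 < t → HasDerivAt Φ 0 t := by
    intro t ht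
    have h := ((hasDerivAt_tail hz ht).const_mul (cc z)).add (hasDerivAt_circInt z ht)
    have e : cc z * -(mm (-z) t) + lineF z t = 0 := by rw [lineF_eq]; ring
    rwa [e] at h
  have hconst : ∀ s : ℝ, 0 < s → s ≤ δ → Φ δ = Φ s := by
    intro s hs hst
    have h0 : (∫ u in s..δ, (0:ℂ)) = Φ δ - Φ s :=
      intervalIntegral.integral_eq_sub_of_hasDerivAt
        (fun x hx => by
          rw [uIcc_of_le hst] at hx
          exact hderiv x (lt_of_lt_of_le hs hx.1))
        intervalIntegrable_const
    have h1 : Φ δ - Φ s = 0 := by rw [← h0]; simp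
    exact sub_eq_zero.mp h1
  set a : ℕ → ℝ := fun n => δ / (n + 1) with ha
  have ha_pos : ∀ n, 0 < a n := fun n => div_pos hδ (by positivity)
  have ha_le : ∀ n, a n ≤ δ := by
    intro n
    apply div_le_self hδ.le
    have : (0:ℝ) ≤ (n:ℝ) := Nat.cast_nonneg n
    linarith
  have ha_tend : Tendsto a atTop (𝓝 0) := by
    have h := (tendsto_const_div_atTop_nhds_zero_nat δ).comp (tendsto_add_atTop_nat 1)
    refine Tendsto.congr (fun n => ?_) h
    simp only [Function.comp, ha]
    push_cast
    ring
  have hmono : Monotone (fun n : ℕ => Ioi (a n)) := by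
    intro n m hnm
    apply Ioi_subset_Ioi
    apply div_le_div_of_nonneg_left hδ.le (by positivity)
    have : (n:ℝ) ≤ (m:ℝ) := Nat.cast_le.mpr hnm
    linarith
  have hunion : (⋃ n, Ioi (a n)) = Ioi (0:ℝ) := by
    ext x
    simp only [mem_iUnion, mem_Ioi]
    constructor
    · rintro ⟨n, hn⟩; exact lt_trans (ha_pos n) hn
    · intro hx
      obtain ⟨n, hn⟩ := exists_nat_gt (δ / x)
      have hδx : δ < n * x := by
        have := (div_lt_iff₀ hx).mp hn
        linarith
      refine ⟨n, ?_⟩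
      rw [ha]
      rw [div_lt_iff₀ (by positivity)]
      nlinarith
  have htail : Tendsto (fun n => ∫ u in Ioi (a n), mm (-z) u) atTop
      (𝓝 (∫ u in Ioi (0:ℝ), mm (-z) u)) := by
    have h := tendsto_setIntegral_of_monotone (fun n => measurableSet_Ioi) hmono
      (by rw [hunion]; exact integrableOn_mm hz)
    rwa [hunion] at h
  have hcirc : Tendsto (fun n => circInt z (a n)) atTop (𝓝 0) := by
    apply squeeze_zero_norm (fun n => norm_circInt_le z (ha_pos n))
    have h1 : Tendsto (fun n => Real.exp (a n)) atTop (𝓝 1) := by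
      simpa [Function.comp_def] using (Real.continuous_exp.tendsto 0).comp ha_tend
    have h2 : Tendsto (fun n => (a n) ^ (1 - z.re)) atTop (𝓝 0) := by
      have hc := (Real.continuousAt_rpow_const 0 (1 - z.re)
        (Or.inr (by linarith))).tendsto.comp ha_tend
      simpa [Function.comp_def, Real.zero_rpow (by linarith : (1:ℝ) - z.re ≠ 0)] using hc
    have h3 : Tendsto (fun n => Real.exp (a n) * Real.exp (Real.pi * |z.im|)
        * (a n) ^ (1 - z.re) * (2 * Real.pi)) atTop
        (𝓝 (1 * Real.exp (Real.pi * |z.im|) * 0 * (2 * Real.pi))) :=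
      ((h1.mul tendsto_const_nhds).mul h2).mul tendsto_const_nhds
    simpa using h3
  have hΦlim : Tendsto (fun n => Φ (a n)) atTop
      (𝓝 (cc z * ∫ u in Ioi (0:ℝ), mm (-z) u)) := by
    have h := (htail.const_mul (cc z)).add hcirc
    simpa using h
  have hΦδ : Φ δ = cc z * ∫ u in Ioi (0:ℝ), mm (-z) u := by
    refine tendsto_nhds_unique ?_ hΦlim
    have e : (fun n => Φ (a n)) = fun _ => Φ δ :=
      funext fun n => (hconst (a n) (ha_pos n) (ha_le n)).symm
    rw [e]
    exact tendsto_const_nhds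
  have : cc z * (∫ u in Ioi δ, mm (-z) u) + circInt z δ = Φ δ := rfl
  rw [this, hΦδ, ← gamma_one_sub hz, cc_eq_sin]
  by_cases hΓ : Complex.Gamma z = 0
  · obtain ⟨m, hm⟩ := (Complex.Gamma_eq_zero_iff z).mp hΓ
    have hsin : Complex.sin ((Real.pi:ℂ) * z) = 0 := by
      rw [Complex.sin_eq_zero_iff]
      exact ⟨-(m:ℤ), by rw [hm]; push_cast; ring⟩
    rw [hΓ, hsin]
    simp
  · have hsin : Complex.sin ((Real.pi:ℂ) * z) ≠ 0 := by
      intro h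
      obtain ⟨k, hk⟩ := Complex.sin_eq_zero_iff.mp h
      have hπ : ((Real.pi : ℝ) : ℂ) ≠ 0 := by
        exact_mod_cast Real.pi_ne_zero
      have hzk : z = (k:ℂ) := by
        apply mul_left_cancel₀ hπ
        rw [hk]; ring
      rcases le_or_gt 1 k with h1 | h1
      · have hre : (1:ℝ) ≤ z.re := by
          rw [hzk]
          simp only [Complex.intCast_re]
          exact_mod_cast h1
        linarith
      · refine hΓ ((Complex.Gamma_eq_zero_iff z).mpr ⟨(-k).toNat, ?_⟩)
        rw [hzk]
        have h2 : ((-k).toNat : ℤ) = -k := Int.toNat_of_nonneg (by omega)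
        have h3 : (((-k).toNat : ℕ) : ℂ) = -(k : ℂ) := by
          rw [← Int.cast_natCast, h2]
          push_cast
          ring
        rw [h3]
        ring
    have href := Complex.Gamma_mul_Gamma_one_sub z
    have href' : Complex.Gamma z * Complex.Gamma (1 - z) * Complex.sin ((Real.pi:ℂ) * z)
        = (Real.pi:ℂ) := by
      rw [href]
      field_simp
    have hΓ1 : Complex.Gamma (1 - z)
        = (Real.pi:ℂ) / Complex.sin ((Real.pi:ℂ) * z) / Complex.Gamma z := by
      rw [div_div, eq_div_iff (mul_ne_zero hsin hΓ)]
      linear_combination href'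
    rw [hΓ1]
    field_simp

lemma intervalIntegrable_mm (w : ℂ) {δ ρ : ℝ} (hδ : 0 < δ) (hρ : δ ≤ ρ) :
    IntervalIntegrable (mm w) volume δ ρ := by
  apply ContinuousOn.intervalIntegrable
  apply (continuousOn_mm w).mono
  intro x hx
  rw [uIcc_of_le hρ] at hx
  exact lt_of_lt_of_le hδ hx.1

lemma mm_hasDerivAt (z : ℂ) {u : ℝ} (hu : 0 < u) :
    HasDerivAt (fun t : ℝ => mm (1 - z) t) (-(mm (1 - z) u) + (1 - z) * mm (-z) u) u := by
  have h0 : HasDerivAt (fun t : ℝ => (t : ℂ)) 1 u := Complex.ofRealCLM.hasDerivAt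
  have hA : HasDerivAt (fun t : ℝ => Complex.exp (-(t : ℂ))) (-Complex.exp (-(u : ℂ))) u := by
    simpa using h0.neg.cexp
  have hL : HasDerivAt (fun t : ℝ => ((Real.log t : ℝ) : ℂ)) ((u⁻¹ : ℝ) : ℂ) u :=
    (Real.hasDerivAt_log hu.ne').ofReal_comp
  have hB : HasDerivAt (fun t : ℝ => Complex.exp ((1 - z) * (Real.log t : ℂ)))
      (Complex.exp ((1 - z) * (Real.log u : ℂ)) * ((1 - z) * ((u⁻¹ : ℝ) : ℂ))) u :=
    (hL.const_mul (1 - z)).cexp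
  have hprod := hA.mul hB
  have hinv : ((u⁻¹ : ℝ) : ℂ) = Complex.exp (-(Real.log u : ℂ)) := by
    rw [Complex.exp_neg, ← Complex.ofReal_exp, Real.exp_log hu, Complex.ofReal_inv]
  have heq : -(mm (1 - z) u) + (1 - z) * mm (-z) u
      = -Complex.exp (-(u : ℂ)) * Complex.exp ((1 - z) * (Real.log u : ℂ))
        + Complex.exp (-(u : ℂ)) *
          (Complex.exp ((1 - z) * (Real.log u : ℂ)) * ((1 - z) * ((u⁻¹ : ℝ) : ℂ))) := by
    unfold mm
    rw [hinv, show Complex.exp ((1 - z) * (Real.log u : ℂ)) *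
        ((1 - z) * Complex.exp (-(Real.log u : ℂ)))
      = (1 - z) * Complex.exp ((1 - z) * (Real.log u : ℂ) + -(Real.log u : ℂ)) from by
        rw [Complex.exp_add]; ring,
      show (1 - z) * (Real.log u : ℂ) + -(Real.log u : ℂ) = -z * (Real.log u : ℂ) from by ring]
    ring
  rw [heq]
  exact hprod

lemma line_rec (z : ℂ) {δ ρ : ℝ} (hδ : 0 < δ) (hρ : δ ≤ ρ) :
    ∫ u in δ..ρ, lineF (z - 1) u
      = (z - 1) * (∫ u in δ..ρ, lineF z u) + cc z * (mm (1 - z) ρ - mm (1 - z) δ) := by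
  have hFTC : ∫ u in δ..ρ, (-(mm (1 - z) u) + (1 - z) * mm (-z) u)
      = mm (1 - z) ρ - mm (1 - z) δ := by
    apply intervalIntegral.integral_eq_sub_of_hasDerivAt
    · intro x hx
      rw [uIcc_of_le hρ] at hx
      exact mm_hasDerivAt z (lt_of_lt_of_le hδ hx.1)
    · exact ((intervalIntegrable_mm (1 - z) hδ hρ).neg).add
        ((intervalIntegrable_mm (-z) hδ hρ).const_mul (1 - z))
  have hi1 : IntervalIntegrable (fun u => -(mm (1 - z) u)) volume δ ρ :=
    (intervalIntegrable_mm (1 - z) hδ hρ).neg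
  have hi2 : IntervalIntegrable (fun u => (1 - z) * mm (-z) u) volume δ ρ :=
    (intervalIntegrable_mm (-z) hδ hρ).const_mul (1 - z)
  have hsplit := intervalIntegral.integral_add hi1 hi2
  rw [intervalIntegral.integral_neg, intervalIntegral.integral_const_mul] at hsplit
  rw [hsplit] at hFTC
  have hl1 : ∫ u in δ..ρ, lineF (z - 1) u = cc (z - 1) * ∫ u in δ..ρ, mm (1 - z) u := by
    simp only [lineF_eq]
    rw [intervalIntegral.integral_const_mul, show -(z - 1) = 1 - z from by ring]
  have hl2 : ∫ u in δ..ρ, lineF z u = cc z * ∫ u in δ..ρ, mm (-z) u := by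
    simp only [lineF_eq]
    rw [intervalIntegral.integral_const_mul]
  rw [hl1, hl2, cc_sub_one]
  linear_combination (cc z) * hFTC

lemma circ_rec (z : ℂ) {δ : ℝ} (hδ : 0 < δ) :
    circInt (z - 1) δ + (1 - z) * circInt z δ = cc z * mm (1 - z) δ := by
  set P : ℝ → ℂ := fun θ => Complex.exp ((δ : ℂ) * Complex.exp (θ * Complex.I)) *
    Complex.exp ((1 - z) * ((Real.log δ : ℂ) + θ * Complex.I)) with hPdef
  have hexpL : Complex.exp ((Real.log δ : ℂ)) = (δ : ℂ) := by
    rw [← Complex.ofReal_exp, Real.exp_log hδ]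
  have hP : ∀ θ : ℝ, HasDerivAt P (circF (z - 1) δ θ + (1 - z) * circF z δ θ) θ := by
    intro θ
    have h0 : HasDerivAt (fun t : ℝ => (t : ℂ)) 1 θ := Complex.ofRealCLM.hasDerivAt
    have he : HasDerivAt (fun t : ℝ => Complex.exp ((t : ℂ) * Complex.I))
        (Complex.exp ((θ : ℂ) * Complex.I) * Complex.I) θ := by
      simpa using (h0.mul_const Complex.I).cexp
    have hA : HasDerivAt (fun t : ℝ => Complex.exp ((δ : ℂ) * Complex.exp ((t : ℂ) * Complex.I)))
        (Complex.exp ((δ : ℂ) * Complex.exp ((θ : ℂ) * Complex.I)) *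
          ((δ : ℂ) * (Complex.exp ((θ : ℂ) * Complex.I) * Complex.I))) θ :=
      (he.const_mul ((δ : ℂ))).cexp
    have hB : HasDerivAt
        (fun t : ℝ => Complex.exp ((1 - z) * ((Real.log δ : ℂ) + (t : ℂ) * Complex.I)))
        (Complex.exp ((1 - z) * ((Real.log δ : ℂ) + (θ : ℂ) * Complex.I)) *
          ((1 - z) * Complex.I)) θ := by
      have : HasDerivAt (fun t : ℝ => (1 - z) * ((Real.log δ : ℂ) + (t : ℂ) * Complex.I))
          ((1 - z) * Complex.I) θ := by
        simpa using ((h0.mul_const Complex.I).const_add ((Real.log δ : ℂ))).const_mul (1 - z)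
      exact this.cexp
    have hprod := hA.mul hB
    have hX : Complex.exp ((1 - z) * ((Real.log δ : ℂ) + (θ : ℂ) * Complex.I))
        = (δ : ℂ) * Complex.exp ((θ : ℂ) * Complex.I) *
          Complex.exp (-z * ((Real.log δ : ℂ) + (θ : ℂ) * Complex.I)) := by
      rw [show (1 - z) * ((Real.log δ : ℂ) + (θ : ℂ) * Complex.I)
        = ((Real.log δ : ℂ) + (θ : ℂ) * Complex.I) + -z * ((Real.log δ : ℂ) + (θ : ℂ) * Complex.I)
        from by ring, Complex.exp_add, Complex.exp_add, hexpL]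
    have heq : circF (z - 1) δ θ + (1 - z) * circF z δ θ
        = Complex.exp ((δ : ℂ) * Complex.exp ((θ : ℂ) * Complex.I)) *
            ((δ : ℂ) * (Complex.exp ((θ : ℂ) * Complex.I) * Complex.I)) *
            Complex.exp ((1 - z) * ((Real.log δ : ℂ) + (θ : ℂ) * Complex.I))
          + Complex.exp ((δ : ℂ) * Complex.exp ((θ : ℂ) * Complex.I)) *
            (Complex.exp ((1 - z) * ((Real.log δ : ℂ) + (θ : ℂ) * Complex.I)) *
              ((1 - z) * Complex.I)) := by
      unfold circF
      rw [hX, show -(z - 1) = 1 - z from by ring, hX]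
      ring
    rw [heq]
    exact hprod
  have hcont : ∀ w : ℂ, IntervalIntegrable (fun θ => circF w δ θ) volume (-Real.pi) Real.pi :=
    fun w => (continuous_circF_theta w δ).intervalIntegrable _ _
  have hFTC : ∫ θ in (-Real.pi)..Real.pi, (circF (z - 1) δ θ + (1 - z) * circF z δ θ)
      = P Real.pi - P (-Real.pi) :=
    intervalIntegral.integral_eq_sub_of_hasDerivAt (fun θ _ => hP θ)
      ((hcont (z - 1)).add ((hcont z).const_mul (1 - z)))
  rw [intervalIntegral.integral_add (hcont (z - 1)) ((hcont z).const_mul (1 - z)),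
    intervalIntegral.integral_const_mul] at hFTC
  unfold circInt
  rw [hFTC, hPdef]
  simp only
  push_cast
  have h1 : Complex.exp (-(Real.pi : ℂ) * Complex.I) = -1 := by
    rw [neg_mul, Complex.exp_neg, Complex.exp_pi_mul_I]; norm_num
  unfold cc mm
  rw [show (1 - z) * ((Real.log δ : ℂ) + (Real.pi : ℂ) * Complex.I)
      = ((1 - z) * (Real.log δ : ℂ) + (Real.pi : ℂ) * Complex.I) + -(Real.pi * Complex.I * z)
      from by ring,
    show (1 - z) * ((Real.log δ : ℂ) + -(Real.pi : ℂ) * Complex.I)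
      = ((1 - z) * (Real.log δ : ℂ) + -((Real.pi : ℂ) * Complex.I)) + (Real.pi * Complex.I * z)
      from by ring]
  simp only [Complex.exp_add, Complex.exp_neg (((Real.pi : ℂ)) * Complex.I),
    Complex.exp_pi_mul_I, h1]
  rw [show (δ : ℂ) * (-1 : ℂ) = -(δ : ℂ) from by ring]
  rw [Complex.exp_neg (Real.pi * Complex.I * z)]
  ring

lemma base_case {z : ℂ} (hz : z.re < 1) {δ : ℝ} (hδ : 0 < δ) :
    Tendsto (fun ρ : ℝ => (∫ u in δ..ρ, lineF z u) + circInt z δ) atTop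
      (𝓝 (2 * Real.pi * Complex.I * (Complex.Gamma z)⁻¹)) := by
  have hmmInt : IntegrableOn (mm (-z)) (Ioi δ) :=
    (integrableOn_mm hz).mono_set (Ioi_subset_Ioi hδ.le)
  have hInt : IntegrableOn (lineF z) (Ioi δ) := by
    have h := hmmInt.const_mul (cc z)
    have e : (fun u => cc z * mm (-z) u) = lineF z := funext fun u => (lineF_eq z u).symm
    rwa [e] at h
  have h1 := MeasureTheory.intervalIntegral_tendsto_integral_Ioi δ hInt tendsto_id
  have hval : (∫ u in Ioi δ, lineF z u) = cc z * ∫ u in Ioi δ, mm (-z) u := by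
    rw [← MeasureTheory.integral_const_mul]
    exact setIntegral_congr_fun measurableSet_Ioi fun x _ => lineF_eq z x
  have h3 : (∫ u in Ioi δ, lineF z u) + circInt z δ
      = 2 * Real.pi * Complex.I * (Complex.Gamma z)⁻¹ := by
    rw [hval]
    exact base_identity hz hδ
  have h2 := h1.add (tendsto_const_nhds (x := circInt z δ))
  rwa [h3] at h2

lemma lineF_one (u : ℝ) : lineF 1 u = 0 := by
  unfold lineF
  rw [show (-1 : ℂ) * ((Real.log u : ℂ) - Real.pi * Complex.I)
      = -(Real.log u : ℂ) + Real.pi * Complex.I from by ring,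
    show (-1 : ℂ) * ((Real.log u : ℂ) + Real.pi * Complex.I)
      = -(Real.log u : ℂ) + -(Real.pi * Complex.I) from by ring,
    Complex.exp_add, Complex.exp_add, Complex.exp_pi_mul_I,
    Complex.exp_neg (Real.pi * Complex.I), Complex.exp_pi_mul_I]
  norm_num

lemma circF_one {δ : ℝ} (hδ : 0 < δ) (θ : ℝ) :
    circF 1 δ θ = Complex.I * Complex.exp ((δ : ℂ) * Complex.exp (θ * Complex.I)) := by
  unfold circF
  have hexpL : Complex.exp ((Real.log δ : ℂ)) = (δ : ℂ) := by
    rw [← Complex.ofReal_exp, Real.exp_log hδ]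
  rw [show (-1 : ℂ) * ((Real.log δ : ℂ) + θ * Complex.I)
      = -((Real.log δ : ℂ) + θ * Complex.I) from by ring,
    Complex.exp_neg, Complex.exp_add, hexpL]
  have h1 : ((δ : ℂ)) ≠ 0 := by exact_mod_cast hδ.ne'
  have h2 : Complex.exp ((θ : ℂ) * Complex.I) ≠ 0 := Complex.exp_ne_zero _
  field_simp

lemma S_one {δ : ℝ} (hδ : 0 < δ) (ρ : ℝ) :
    (∫ u in δ..ρ, lineF 1 u) + circInt 1 δ = 2 * Real.pi * Complex.I := by
  have hline : (∫ u in δ..ρ, lineF 1 u) = 0 := by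
    simp [lineF_one]
  have hcauchy := Complex.circleIntegral_sub_inv_smul_of_differentiable_on_off_countable
    (R := δ) (c := 0) (w := 0) (f := Complex.exp) (s := ∅) countable_empty
    (Metric.mem_ball_self hδ) Complex.continuous_exp.continuousOn
    (fun x _ => Complex.differentiable_exp.differentiableAt)
  rw [circleIntegral] at hcauchy
  have hint : ∫ θ in (0:ℝ)..2 * Real.pi,
      Complex.I * Complex.exp ((δ : ℂ) * Complex.exp (θ * Complex.I))
      = 2 * Real.pi * Complex.I := by
    rw [Complex.exp_zero, smul_eq_mul, mul_one] at hcauchy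
    rw [← hcauchy]
    apply intervalIntegral.integral_congr
    intro θ _
    simp only [deriv_circleMap, circleMap, Complex.ofReal_zero, zero_add, smul_eq_mul,
      sub_zero]
    have h1 : ((δ : ℂ)) ≠ 0 := by exact_mod_cast hδ.ne'
    have h2 : Complex.exp ((θ : ℂ) * Complex.I) ≠ 0 := Complex.exp_ne_zero _
    field_simp
  have hper : Function.Periodic
      (fun θ : ℝ => Complex.I * Complex.exp ((δ : ℂ) * Complex.exp (θ * Complex.I)))
      (2 * Real.pi) := by
    intro θ
    simp only
    congr 2
    push_cast
    rw [add_mul, Complex.exp_add, Complex.exp_two_pi_mul_I, mul_one]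
  have hshift := hper.intervalIntegral_add_eq (-Real.pi) 0
  rw [zero_add, show -Real.pi + 2 * Real.pi = Real.pi from by ring] at hshift
  have hcirc : circInt 1 δ = 2 * Real.pi * Complex.I := by
    unfold circInt
    rw [intervalIntegral.integral_congr (g := fun θ : ℝ =>
      Complex.I * Complex.exp ((δ : ℂ) * Complex.exp (θ * Complex.I)))
      (fun θ _ => circF_one hδ θ), hshift, hint]
  rw [hline, hcirc, zero_add]

lemma boundary_tendsto (z : ℂ) :
    Tendsto (fun ρ : ℝ => cc z * mm (1 - z) ρ) atTop (𝓝 0) := by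
  have hb : Tendsto (fun ρ : ℝ => ‖cc z‖ * (ρ ^ ((1:ℝ) - z.re) * Real.exp (-ρ))) atTop
      (𝓝 (‖cc z‖ * 0)) := by
    apply Tendsto.const_mul
    have := tendsto_rpow_mul_exp_neg_mul_atTop_nhds_zero ((1:ℝ) - z.re) 1 one_pos
    simpa using this
  rw [mul_zero] at hb
  apply squeeze_zero_norm' _ hb
  filter_upwards [eventually_gt_atTop (0:ℝ)] with ρ hρ
  have hmm : ‖mm (1 - z) ρ‖ = Real.exp (-ρ) * ρ ^ ((1:ℝ) - z.re) := by
    unfold mm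
    rw [norm_mul, Complex.norm_exp, Complex.norm_exp]
    have e1 : (-(ρ:ℂ)).re = -ρ := by simp
    have e2 : ((1 - z) * (Real.log ρ : ℂ)).re = Real.log ρ * (1 - z.re) := by
      simp [Complex.mul_re, Complex.sub_re, Complex.one_re, Complex.sub_im]
      ring
    rw [e1, e2, Real.rpow_def_of_pos hρ]
  rw [norm_mul, hmm]
  exact le_of_eq (by ring)
lemma S_rec (z : ℂ) {δ ρ : ℝ} (hδ : 0 < δ) (hρ : δ ≤ ρ) :
    (∫ u in δ..ρ, lineF (z - 1) u) + circInt (z - 1) δ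
      = (z - 1) * ((∫ u in δ..ρ, lineF z u) + circInt z δ) + cc z * mm (1 - z) ρ := by
  rw [line_rec z hδ hρ]
  linear_combination circ_rec z hδ

lemma key_step {z : ℂ} (hz1 : z ≠ 1) {δ : ℝ} (hδ : 0 < δ)
    (ih : Tendsto (fun ρ : ℝ => (∫ u in δ..ρ, lineF (z - 1) u) + circInt (z - 1) δ) atTop
      (𝓝 (2 * Real.pi * Complex.I * (Complex.Gamma (z - 1))⁻¹))) :
    Tendsto (fun ρ : ℝ => (∫ u in δ..ρ, lineF z u) + circInt z δ) atTop
      (𝓝 (2 * Real.pi * Complex.I * (Complex.Gamma z)⁻¹)) := by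
  have hzne : z - 1 ≠ 0 := sub_ne_zero.mpr hz1
  have hlim := (ih.sub (boundary_tendsto z)).mul
    (tendsto_const_nhds (x := (z - 1)⁻¹))
  have hval : (2 * Real.pi * Complex.I * (Complex.Gamma (z - 1))⁻¹ - 0) * (z - 1)⁻¹
      = 2 * Real.pi * Complex.I * (Complex.Gamma z)⁻¹ := by
    have hG : Complex.Gamma z = (z - 1) * Complex.Gamma (z - 1) := by
      have := Complex.Gamma_add_one (z - 1) hzne
      rwa [sub_add_cancel] at this
    rw [hG, mul_inv]
    ring
  rw [hval] at hlim
  apply hlim.congr'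
  filter_upwards [eventually_ge_atTop δ] with ρ hρ
  have hrec := S_rec z hδ hρ
  field_simp
  linear_combination hrec

theorem hankel_formula' (z : ℂ) (δ : ℝ) (hδ : 0 < δ) :
    Tendsto (fun ρ : ℝ => (∫ u in δ..ρ, lineF z u) + circInt z δ) atTop
      (𝓝 (2 * Real.pi * Complex.I * (Complex.Gamma z)⁻¹)) := by
  obtain ⟨n, hn⟩ := exists_nat_gt z.re
  induction n generalizing z with
  | zero => exact base_case (by push_cast at hn; linarith) hδ
  | succ n ih =>
    by_cases h1 : z.re < 1
    · exact base_case h1 hδ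
    · by_cases hz1 : z = 1
      · subst hz1
        have he : (fun ρ : ℝ => (∫ u in δ..ρ, lineF 1 u) + circInt 1 δ)
            = fun _ : ℝ => 2 * Real.pi * Complex.I := funext (S_one hδ)
        rw [he, show (2 : ℂ) * Real.pi * Complex.I * (Complex.Gamma 1)⁻¹
          = 2 * Real.pi * Complex.I from by rw [Complex.Gamma_one]; simp]
        exact tendsto_const_nhds
      · have hz' : (z - 1).re < n := by
          simp only [Complex.sub_re, Complex.one_re]
          push_cast at hn
          linarith
        exact key_step hz1 hδ (ih (z - 1) hz')

end HankelAux

/-- Hankel's formula `1/Γ(z) = (1/(2πi)) ∮_ψ e^ζ ζ^{-z} dζ`, with the Hankel contour `ψ`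
realized concretely: the lower edge of the cut `(-∞, -δ]` traversed inwards
(branch `ζ^{-z} = exp (-z (log u - iπ))`), the circle `|ζ| = δ` traversed
counterclockwise, and the upper edge traversed outwards
(branch `ζ^{-z} = exp (-z (log u + iπ))`), in the limit `ρ → ∞`. -/
theorem hankel_formula (z : ℂ) (δ : ℝ) (hδ : 0 < δ) :
    Tendsto (fun ρ : ℝ =>
        (∫ u in δ..ρ, Complex.exp (-(u : ℂ)) *
            (Complex.exp (-z * ((Real.log u : ℂ) - Real.pi * Complex.I)) -
              Complex.exp (-z * ((Real.log u : ℂ) + Real.pi * Complex.I)))) +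
          ∫ θ in (-Real.pi)..Real.pi,
            Complex.exp ((δ : ℂ) * Complex.exp (θ * Complex.I)) *
              Complex.exp (-z * ((Real.log δ : ℂ) + θ * Complex.I)) *
              ((δ : ℂ) * Complex.I * Complex.exp (θ * Complex.I)))
      atTop (𝓝 (2 * Real.pi * Complex.I * (Complex.Gamma z)⁻¹)) := by
  exact hankel_formula' z δ hδ
end
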